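/- arXiv:2408.09638 — 6 statements merged into one kernel-verified Lean document; each statement's English description precedes it below -/
import Mathlib

section
/- Let G be a locally compact second countable group with left Haar measure μ, let H be a separable complex Hilbert space, and let A, B : G → H be bounded weakly measurable maps (i.e. x ↦ ⟨A(x), v⟩ is Borel measurable for every v ∈ H, and sup_{x∈G} ‖A(x)‖ < ∞, sup_{y∈G} ‖B(y)‖ < ∞). Suppose φ : G → ℂ satisfies φ(y x⁻¹) = ⟨A(x), B(y)⟩ for all x, y ∈ G. Then for all f, g ∈ L²(G, μ) there exist sequences (fₙ)ₙ, (gₙ)ₙ in L²(G, μ) such that Σₙ ‖fₙ‖₂ ‖gₙ‖₂ ≤ (sup_{x} ‖A(x)‖)(sup_{y} ‖B(y)‖) ‖f‖₂ ‖g‖₂ and, for every x ∈ G, φ(x) · ∫_G f(x⁻¹y) · conj(g(y)) dμ(y) = Σₙ ∫_G fₙ(x⁻¹y) · conj(gₙ(y)) dμ(y), the series on the right converging absolutely. (In other words, φ multiplies every coefficient of the left regular representation into a sum of such coefficients with controlled norm.) -/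
open ComplexConjugate Filter Topology
open scoped ComplexInnerProductSpace Pointwise

universe u

/-- A factorization of length `d` of a function `φ : G → ℂ` consists of complex Hilbert
spaces `H 0, …, H d` with `H 0 = H d = ℂ` (witnessed by the linear isometric isomorphisms
`e0`, `ed`) together with bounded maps `xi i : G → B(H (i+1), H i)` such that
`φ (x 1 * ⋯ * x d)` equals `xi 1 (x 1) ∘ ⋯ ∘ xi d (x d)` applied to `1 ∈ ℂ = H d`,
read in `H 0 = ℂ`. -/
structure Factorization (d : ℕ) (G : Type*) [Group G] (φ : G → ℂ) where
  H : Fin (d + 1) → Type u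
  [normed : ∀ i, NormedAddCommGroup (H i)]
  [ips : ∀ i, InnerProductSpace ℂ (H i)]
  [complete : ∀ i, CompleteSpace (H i)]
  e0 : H 0 ≃ₗᵢ[ℂ] ℂ
  ed : H (Fin.last d) ≃ₗᵢ[ℂ] ℂ
  xi : ∀ i : Fin d, G → (H i.succ →L[ℂ] H i.castSucc)
  bdd : ∀ i : Fin d, ∃ M : ℝ, ∀ x : G, ‖xi i x‖ ≤ M
  factor : ∀ x : Fin d → G,
    φ (List.ofFn x).prod =
      e0 (Fin.reverseInduction (motive := fun i => H i) (ed.symm 1)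
        (fun j v => xi j (x j) v) 0)

attribute [instance] Factorization.normed Factorization.ips Factorization.complete

namespace Factorization

variable {d : ℕ} {G : Type*} [Group G] {φ : G → ℂ}

/-- The constant of a factorization, `∏ i, sup_x ‖xi i x‖`. -/
noncomputable def const (F : Factorization d G φ) : ℝ :=
  ∏ i : Fin d, ⨆ x : G, ‖F.xi i x‖

/-- The partial right product `xi (i+1) (x (i+1)) ⋯ xi d (x d) (1) ∈ H i`. -/
noncomputable def rightVec (F : Factorization d G φ) (x : Fin d → G) (i : Fin (d + 1)) :
    F.H i :=
  Fin.reverseInduction (motive := fun i => F.H i) (F.ed.symm 1)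
    (fun j v => F.xi j (x j) v) i

/-- The partial left product `(xi 1 (x 1) ⋯ xi i (x i))^* (1) ∈ H i`. -/
noncomputable def leftVec (F : Factorization d G φ) (x : Fin d → G) (i : Fin (d + 1)) :
    F.H i :=
  Fin.induction (motive := fun i => F.H i) (F.e0.symm 1)
    (fun j w => ContinuousLinearMap.adjoint (F.xi j (x j)) w) i

end Factorization

/-- `φ` is an `M_d`-multiplier: a bounded continuous function admitting a factorization
of length `d`. -/
def IsMdMultiplier (d : ℕ) {G : Type*} [Group G] [TopologicalSpace G] (φ : G → ℂ) : Prop :=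
  Continuous φ ∧ (∃ M : ℝ, ∀ x : G, ‖φ x‖ ≤ M) ∧ Nonempty (Factorization.{0} d G φ)

/-- The `M_d`-multiplier norm `‖φ‖_{M_d}`: the infimum of the constants over all
factorizations of length `d` of `φ`. -/
noncomputable def MdNorm (d : ℕ) {G : Type*} [Group G] (φ : G → ℂ) : ℝ :=
  sInf {C : ℝ | ∃ F : Factorization.{0} d G φ, F.const = C}

/-- A chain of bounded linear maps `eta i : L¹(G, μ) → B(K (i+1), K i)` between complex
Hilbert spaces `K 0, …, K d` with `K 0 = K d = ℂ`. -/
structure L1Chain (d : ℕ) {G : Type*} [Group G] [MeasurableSpace G]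
    (μ : MeasureTheory.Measure G) where
  K : Fin (d + 1) → Type u
  [normed : ∀ i, NormedAddCommGroup (K i)]
  [ips : ∀ i, InnerProductSpace ℂ (K i)]
  [complete : ∀ i, CompleteSpace (K i)]
  e0 : K 0 ≃ₗᵢ[ℂ] ℂ
  ed : K (Fin.last d) ≃ₗᵢ[ℂ] ℂ
  eta : ∀ i : Fin d, MeasureTheory.Lp ℂ 1 μ →L[ℂ] (K i.succ →L[ℂ] K i.castSucc)

attribute [instance] L1Chain.normed L1Chain.ips L1Chain.complete

open MeasureTheory

/-- Convolution of two functions on a group: `(f ∗ g) x = ∫ f y * g (y⁻¹ * x) dμ y`. -/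
noncomputable def conv {G : Type*} [Group G] [MeasurableSpace G] (μ : Measure G)
    (f g : G → ℂ) : G → ℂ :=
  fun x => ∫ y, f y * g (y⁻¹ * x) ∂μ

/-- Iterated convolution of a (nonempty) list of functions. -/
noncomputable def convProd {G : Type*} [Group G] [MeasurableSpace G] (μ : Measure G) :
    List (G → ℂ) → (G → ℂ)
  | [] => fun _ => 0
  | [f] => f
  | f :: g :: l => conv μ f (convProd μ (g :: l))

namespace L1Chain

variable {d : ℕ} {G : Type*} [Group G] [MeasurableSpace G] {μ : Measure G}

/-- The constant `∏ i, ‖eta i‖` of a chain. -/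
noncomputable def const (E : L1Chain d μ) : ℝ :=
  ∏ i : Fin d, ‖E.eta i‖

/-- The partial right product `eta (i+1) (f (i+1)) ⋯ eta d (f d) (1) ∈ K i`. -/
noncomputable def rightVec (E : L1Chain d μ) (f : Fin d → Lp ℂ 1 μ) (i : Fin (d + 1)) :
    E.K i :=
  Fin.reverseInduction (motive := fun i => E.K i) (E.ed.symm 1)
    (fun j v => E.eta j (f j) v) i

/-- The partial left product `(eta 1 (f 1) ⋯ eta i (f i))^* (1) ∈ K i`. -/
noncomputable def leftVec (E : L1Chain d μ) (f : Fin d → Lp ℂ 1 μ) (i : Fin (d + 1)) :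
    E.K i :=
  Fin.induction (motive := fun i => E.K i) (E.e0.symm 1)
    (fun j w => ContinuousLinearMap.adjoint (E.eta j (f j)) w) i

/-- The scalar `eta 1 (f 1) ⋯ eta d (f d) (1) ∈ ℂ`. -/
noncomputable def apply (E : L1Chain d μ) (f : Fin d → Lp ℂ 1 μ) : ℂ :=
  E.e0 (E.rightVec f 0)

end L1Chain

section Helpers

open scoped ENNReal NNReal

variable {α : Type*} [MeasurableSpace α] {ν : Measure α}

private lemma helper_cs {ι : Type*} (p q : ι → ℝ) (hp : ∀ i, 0 ≤ p i) (hq : ∀ i, 0 ≤ q i)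
    (hp2 : Summable fun i => p i ^ 2) (hq2 : Summable fun i => q i ^ 2) :
    Summable (fun i => p i * q i) ∧
      ∑' i, p i * q i ≤ Real.sqrt (∑' i, p i ^ 2) * Real.sqrt (∑' i, q i ^ 2) := by
  have hsum : Summable (fun i => p i * q i) := by
    refine Summable.of_nonneg_of_le (fun i => mul_nonneg (hp i) (hq i)) (fun i => ?_)
      ((hp2.add hq2).div_const 2)
    nlinarith [sq_nonneg (p i - q i)]
  refine ⟨hsum, Summable.tsum_le_of_sum_le hsum fun s => ?_⟩
  have h0 : (0:ℝ) ≤ ∑ i ∈ s, p i * q i :=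
    Finset.sum_nonneg fun i _ => mul_nonneg (hp i) (hq i)
  have h1 : (∑ i ∈ s, p i * q i) ^ 2 ≤ (∑' i, p i ^ 2) * ∑' i, q i ^ 2 := by
    refine (Finset.sum_mul_sq_le_sq_mul_sq s p q).trans ?_
    refine mul_le_mul (Summable.sum_le_tsum s (fun i _ => sq_nonneg _) hp2)
      (Summable.sum_le_tsum s (fun i _ => sq_nonneg _) hq2)
      (Finset.sum_nonneg fun i _ => sq_nonneg _) (tsum_nonneg fun i => sq_nonneg _)
  calc ∑ i ∈ s, p i * q i = Real.sqrt ((∑ i ∈ s, p i * q i) ^ 2) := (Real.sqrt_sq h0).symm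
    _ ≤ Real.sqrt ((∑' i, p i ^ 2) * ∑' i, q i ^ 2) := Real.sqrt_le_sqrt h1
    _ = Real.sqrt (∑' i, p i ^ 2) * Real.sqrt (∑' i, q i ^ 2) :=
        Real.sqrt_mul (tsum_nonneg fun i => sq_nonneg _) _

private lemma helper_conj_inner (u v : Lp ℂ 2 ν) :
    (∫ y, u y * conj (v y) ∂ν) = conj (⟪u, v⟫ : ℂ) := by
  rw [MeasureTheory.L2.inner_def, ← integral_conj]
  refine integral_congr_ae (Filter.Eventually.of_forall fun y => ?_)
  simp only [RCLike.inner_apply, map_mul, RCLike.conj_conj, RingHom.id_apply]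
  ring

private lemma helper_integrable (u v : Lp ℂ 2 ν) :
    Integrable (fun y => u y * conj (v y)) ν := by
  have h := MeasureTheory.L2.integrable_inner (𝕜 := ℂ) v u
  refine h.congr (Filter.Eventually.of_forall fun y => ?_)
  simp only [RCLike.inner_apply, RingHom.id_apply]

private lemma helper_int_norm_le (u v : Lp ℂ 2 ν) :
    (∫ y, ‖u y * conj (v y)‖ ∂ν) ≤ ‖u‖ * ‖v‖ := by
  have hpqr : (1 : ℝ≥0∞) / 1 = 1 / 2 + 1 / 2 := by
    rw [ENNReal.add_halves]
    simp
  have hH := eLpNorm_le_eLpNorm_mul_eLpNorm'_of_norm (μ := ν) (p := 2) (q := 2) (r := 1)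
      (Lp.aestronglyMeasurable u) (Lp.aestronglyMeasurable v)
      (fun a c => a * conj c) 1
      (Filter.Eventually.of_forall fun y => by simp)
  simp only [ENNReal.coe_one, one_mul] at hH
  have hmeas : AEStronglyMeasurable (fun y => (u : α → ℂ) y * conj ((v : α → ℂ) y)) ν :=
    (helper_integrable u v).1
  rw [integral_norm_eq_lintegral_enorm hmeas, ← eLpNorm_one_eq_lintegral_enorm]
  have h2 : ‖u‖ * ‖v‖ = (eLpNorm (u : α → ℂ) 2 ν * eLpNorm (v : α → ℂ) 2 ν).toReal := by
    rw [ENNReal.toReal_mul, Lp.norm_def, Lp.norm_def]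
  rw [h2]
  exact ENNReal.toReal_mono
    (ENNReal.mul_ne_top (Lp.eLpNorm_ne_top u) (Lp.eLpNorm_ne_top v)) hH

private lemma helper_sq_sum {ι : Type*} [Countable ι]
    (f : Lp ℂ 2 ν) (a : ι → α → ℂ) (hameas : ∀ i, Measurable (a i))
    (M : ℝ)
    (hbd : ∀ (s : Finset ι) (z : α), ∑ i ∈ s, ‖a i z‖ ^ 2 ≤ M ^ 2)
    (u : ι → Lp ℂ 2 ν) (hu : ∀ i, (u i : α → ℂ) =ᵐ[ν] fun z => f z * a i z) :
    Summable (fun i => ‖u i‖ ^ 2) ∧ ∑' i, ‖u i‖ ^ 2 ≤ M ^ 2 * ‖f‖ ^ 2 := by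
  classical
  set N : ι → ℝ≥0∞ :=
    fun i => ∫⁻ z, (‖(f : α → ℂ) z‖₊ : ℝ≥0∞) ^ (2:ℝ) * (‖a i z‖₊ : ℝ≥0∞) ^ (2:ℝ) ∂ν with hN
  have hfm : AEMeasurable (fun z => ((‖(f : α → ℂ) z‖₊ : ℝ≥0∞)) ^ (2:ℝ)) ν :=
    ENNReal.continuous_rpow_const.measurable.comp_aemeasurable
      (Lp.aestronglyMeasurable f).enorm
  have key : ∀ i, eLpNorm (u i : α → ℂ) 2 ν = N i ^ (1/2 : ℝ) := by
    intro i
    rw [eLpNorm_congr_ae (hu i), eLpNorm_eq_lintegral_rpow_enorm_toReal two_ne_zero ENNReal.ofNat_ne_top]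
    have h2 : ((2:ℝ≥0∞)).toReal = (2:ℝ) := by simp
    rw [h2, hN]
    congr 1
    refine lintegral_congr fun z => ?_
    rw [enorm_eq_nnnorm, nnnorm_mul, ENNReal.coe_mul, ENNReal.mul_rpow_of_nonneg _ _ (by norm_num)]
  have hNfin : ∀ i, N i ≠ ∞ := by
    intro i
    have h2 : N i = (eLpNorm (u i : α → ℂ) 2 ν) ^ (2:ℝ) := by
      rw [key i, ← ENNReal.rpow_mul]
      norm_num
    rw [h2]
    exact (ENNReal.rpow_lt_top_of_nonneg (by norm_num)
      (Lp.eLpNorm_ne_top (u i))).ne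
  have hnorm : ∀ i, ‖u i‖ ^ 2 = (N i).toReal := by
    intro i
    rw [Lp.norm_def, key i, ← ENNReal.toReal_rpow,
      ← Real.rpow_natCast (((N i).toReal) ^ (1/2:ℝ)) 2,
      ← Real.rpow_mul ENNReal.toReal_nonneg]
    norm_num
  have hptwise : ∀ z : α, (∑' i, (‖a i z‖₊ : ℝ≥0∞) ^ (2:ℝ)) ≤ ENNReal.ofReal (M ^ 2) := by
    intro z
    rw [ENNReal.tsum_eq_iSup_sum]
    refine iSup_le fun s => ?_
    have h1 : ∑ i ∈ s, (‖a i z‖₊ : ℝ≥0∞) ^ (2:ℝ)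
        = ENNReal.ofReal (∑ i ∈ s, ‖a i z‖ ^ 2) := by
      rw [ENNReal.ofReal_sum_of_nonneg fun i _ => sq_nonneg _]
      refine Finset.sum_congr rfl fun i _ => ?_
      rw [← enorm_eq_nnnorm, ← ofReal_norm_eq_enorm,
        ENNReal.ofReal_rpow_of_nonneg (norm_nonneg _) (by norm_num)]
      norm_num [Real.rpow_natCast]
    rw [h1]
    exact ENNReal.ofReal_le_ofReal (hbd s z)
  have hL2 : (∫⁻ z, (‖(f : α → ℂ) z‖₊ : ℝ≥0∞) ^ (2:ℝ) ∂ν)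
      = eLpNorm (f : α → ℂ) 2 ν ^ (2:ℝ) := by
    rw [eLpNorm_eq_lintegral_rpow_enorm_toReal two_ne_zero ENNReal.ofNat_ne_top]
    have h2 : ((2:ℝ≥0∞)).toReal = (2:ℝ) := by simp
    rw [h2, ← ENNReal.rpow_mul]
    norm_num
    simp only [enorm_eq_nnnorm]
  have hsum_le : ∑' i, N i ≤ ENNReal.ofReal (M ^ 2) * eLpNorm (f : α → ℂ) 2 ν ^ (2:ℝ) := by
    have hmeas_i : ∀ i : ι, AEMeasurable
        (fun z => (‖(f : α → ℂ) z‖₊ : ℝ≥0∞) ^ (2:ℝ) * (‖a i z‖₊ : ℝ≥0∞) ^ (2:ℝ)) ν := by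
      intro i
      exact hfm.mul (ENNReal.continuous_rpow_const.measurable.comp
        (measurable_coe_nnreal_ennreal.comp (hameas i).nnnorm)).aemeasurable
    rw [hN, ← lintegral_tsum hmeas_i]
    calc ∫⁻ z, (∑' i, (‖(f : α → ℂ) z‖₊ : ℝ≥0∞) ^ (2:ℝ) * (‖a i z‖₊ : ℝ≥0∞) ^ (2:ℝ)) ∂ν
        ≤ ∫⁻ z, ENNReal.ofReal (M ^ 2) * (‖(f : α → ℂ) z‖₊ : ℝ≥0∞) ^ (2:ℝ) ∂ν := by
          refine lintegral_mono fun z => ?_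
          rw [ENNReal.tsum_mul_left, mul_comm (ENNReal.ofReal (M ^ 2))]
          exact mul_le_mul_right (hptwise z) _
      _ = ENNReal.ofReal (M ^ 2) * ∫⁻ z, (‖(f : α → ℂ) z‖₊ : ℝ≥0∞) ^ (2:ℝ) ∂ν :=
          lintegral_const_mul' _ _ ENNReal.ofReal_ne_top
      _ = ENNReal.ofReal (M ^ 2) * eLpNorm (f : α → ℂ) 2 ν ^ (2:ℝ) := by rw [hL2]
  have hRHS_ne_top : ENNReal.ofReal (M ^ 2) * eLpNorm (f : α → ℂ) 2 ν ^ (2:ℝ) ≠ ∞ :=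
    ENNReal.mul_ne_top ENNReal.ofReal_ne_top
      (ENNReal.rpow_lt_top_of_nonneg (by norm_num) (Lp.eLpNorm_ne_top f)).ne
  have hne : ∑' i, N i ≠ ∞ := (lt_of_le_of_lt hsum_le hRHS_ne_top.lt_top).ne
  constructor
  · exact (ENNReal.summable_toReal hne).congr fun i => (hnorm i).symm
  · calc ∑' i, ‖u i‖ ^ 2 = (∑' i, N i).toReal := by
          rw [ENNReal.tsum_toReal_eq hNfin]; exact tsum_congr hnorm
      _ ≤ (ENNReal.ofReal (M ^ 2) * eLpNorm (f : α → ℂ) 2 ν ^ (2:ℝ)).toReal :=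
          ENNReal.toReal_mono hRHS_ne_top hsum_le
      _ = M ^ 2 * ‖f‖ ^ 2 := by
          rw [ENNReal.toReal_mul, ENNReal.toReal_ofReal (sq_nonneg M),
            ← ENNReal.toReal_rpow, ← Lp.norm_def]
          norm_num [Real.rpow_natCast]

end Helpers

set_option maxHeartbeats 2400000 in
/-- If `φ (y * x⁻¹) = ⟪A x, B y⟫` for bounded weakly measurable maps
`A B : G → H` into a separable Hilbert space, then `φ` multiplies every coefficient of the
left regular representation into an absolutely convergent sum of such coefficients, with
controlled norm. -/
theorem md_multiplier_of_weakly_measurable_factorization_fourier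
    {G : Type*} [Group G] [TopologicalSpace G] [IsTopologicalGroup G]
    [LocallyCompactSpace G] [SecondCountableTopology G]
    [MeasurableSpace G] [BorelSpace G] (μ : Measure G) [μ.IsHaarMeasure]
    {H : Type*} [NormedAddCommGroup H] [InnerProductSpace ℂ H] [CompleteSpace H]
    [TopologicalSpace.SeparableSpace H]
    (A B : G → H) (MA MB : ℝ)
    (hAmeas : ∀ v : H, Measurable fun x : G => ⟪A x, v⟫)
    (hBmeas : ∀ v : H, Measurable fun y : G => ⟪B y, v⟫)
    (hA : ∀ x : G, ‖A x‖ ≤ MA) (hB : ∀ y : G, ‖B y‖ ≤ MB)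
    (φ : G → ℂ) (hφ : ∀ x y : G, φ (y * x⁻¹) = ⟪A x, B y⟫)
    (f g : Lp ℂ 2 μ) :
    ∃ fs gs : ℕ → Lp ℂ 2 μ,
      (Summable fun n => ‖fs n‖ * ‖gs n‖) ∧
      (∑' n, ‖fs n‖ * ‖gs n‖) ≤ MA * MB * ‖f‖ * ‖g‖ ∧
      ∀ x : G,
        (Summable fun n => ‖∫ y, (fs n) (x⁻¹ * y) * conj ((gs n) y) ∂μ‖) ∧
        HasSum (fun n => ∫ y, (fs n) (x⁻¹ * y) * conj ((gs n) y) ∂μ)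
          (φ x * ∫ y, f (x⁻¹ * y) * conj (g y) ∂μ) := by
  classical
  have hMA0 : 0 ≤ MA := (norm_nonneg (A 1)).trans (hA 1)
  have hMB0 : 0 ≤ MB := (norm_nonneg (B 1)).trans (hB 1)
  obtain ⟨w, b, hb⟩ := exists_hilbertBasis ℂ H
  haveI hcw : Countable w := by
    refine Pairwise.countable_of_isOpen_disjoint
      (s := fun i : w => Metric.ball (b i) (1/2)) ?_ (fun i => Metric.isOpen_ball)
      (fun i => Metric.nonempty_ball.2 (by norm_num))
    intro i j hij
    refine Metric.ball_disjoint_ball ?_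
    have h1 : ‖b i‖ = 1 := b.orthonormal.1 i
    have h2 : ‖b j‖ = 1 := b.orthonormal.1 j
    have h3 : (⟪b i, b j⟫ : ℂ) = 0 := b.orthonormal.2 hij
    have h4 : ‖b i - b j‖ ^ 2 = 2 := by
      rw [@norm_sub_sq ℂ, h1, h2, h3]
      norm_num
    rw [dist_eq_norm]
    nlinarith [norm_nonneg (b i - b j)]
  haveI : Encodable w := Encodable.ofCountable w
  -- the coefficient L² functions
  have hfm : ∀ i : w, MeasureTheory.MemLp (fun z => (f : G → ℂ) z * ⟪A z, b i⟫) 2 μ := by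
    intro i
    refine MeasureTheory.MemLp.of_le_mul (c := MA) (Lp.memLp f)
      ((Lp.aestronglyMeasurable f).mul (hAmeas (b i)).aestronglyMeasurable)
      (Filter.Eventually.of_forall fun z => ?_)
    rw [norm_mul, mul_comm MA]
    refine mul_le_mul_of_nonneg_left ?_ (norm_nonneg _)
    calc ‖(⟪A z, b i⟫ : ℂ)‖ ≤ ‖A z‖ * ‖b i‖ := norm_inner_le_norm _ _
      _ = ‖A z‖ := by rw [b.orthonormal.1 i, mul_one]
      _ ≤ MA := hA z
  have hgm : ∀ i : w, MeasureTheory.MemLp (fun z => (g : G → ℂ) z * ⟪B z, b i⟫) 2 μ := by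
    intro i
    refine MeasureTheory.MemLp.of_le_mul (c := MB) (Lp.memLp g)
      ((Lp.aestronglyMeasurable g).mul (hBmeas (b i)).aestronglyMeasurable)
      (Filter.Eventually.of_forall fun z => ?_)
    rw [norm_mul, mul_comm MB]
    refine mul_le_mul_of_nonneg_left ?_ (norm_nonneg _)
    calc ‖(⟪B z, b i⟫ : ℂ)‖ ≤ ‖B z‖ * ‖b i‖ := norm_inner_le_norm _ _
      _ = ‖B z‖ := by rw [b.orthonormal.1 i, mul_one]
      _ ≤ MB := hB z
  set fs0 : w → Lp ℂ 2 μ := fun i => (hfm i).toLp _ with hfs0_def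
  set gs0 : w → Lp ℂ 2 μ := fun i => (hgm i).toLp _ with hgs0_def
  have hfs0c : ∀ i, (fs0 i : G → ℂ) =ᵐ[μ] fun z => (f : G → ℂ) z * ⟪A z, b i⟫ :=
    fun i => MeasureTheory.MemLp.coeFn_toLp _
  have hgs0c : ∀ i, (gs0 i : G → ℂ) =ᵐ[μ] fun z => (g : G → ℂ) z * ⟪B z, b i⟫ :=
    fun i => MeasureTheory.MemLp.coeFn_toLp _
  -- Bessel
  have hbdA : ∀ (s : Finset w) (z : G), ∑ i ∈ s, ‖(⟪A z, b i⟫ : ℂ)‖ ^ 2 ≤ MA ^ 2 := by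
    intro s z
    have h1 : ∑ i ∈ s, ‖(⟪b i, A z⟫ : ℂ)‖ ^ 2 ≤ ‖A z‖ ^ 2 :=
      b.orthonormal.sum_inner_products_le (A z)
    have h2 : ∑ i ∈ s, ‖(⟪A z, b i⟫ : ℂ)‖ ^ 2 = ∑ i ∈ s, ‖(⟪b i, A z⟫ : ℂ)‖ ^ 2 :=
      Finset.sum_congr rfl fun i _ => by rw [norm_inner_symm]
    refine (h2.trans_le h1).trans ?_
    exact pow_le_pow_left₀ (norm_nonneg _) (hA z) 2
  have hbdB : ∀ (s : Finset w) (z : G), ∑ i ∈ s, ‖(⟪B z, b i⟫ : ℂ)‖ ^ 2 ≤ MB ^ 2 := by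
    intro s z
    have h1 : ∑ i ∈ s, ‖(⟪b i, B z⟫ : ℂ)‖ ^ 2 ≤ ‖B z‖ ^ 2 :=
      b.orthonormal.sum_inner_products_le (B z)
    have h2 : ∑ i ∈ s, ‖(⟪B z, b i⟫ : ℂ)‖ ^ 2 = ∑ i ∈ s, ‖(⟪b i, B z⟫ : ℂ)‖ ^ 2 :=
      Finset.sum_congr rfl fun i _ => by rw [norm_inner_symm]
    refine (h2.trans_le h1).trans ?_
    exact pow_le_pow_left₀ (norm_nonneg _) (hB z) 2
  obtain ⟨hfsum, hfle⟩ := helper_sq_sum f (fun i z => (⟪A z, b i⟫ : ℂ))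
    (fun i => hAmeas (b i)) MA hbdA fs0 hfs0c
  obtain ⟨hgsum, hgle⟩ := helper_sq_sum g (fun i z => (⟪B z, b i⟫ : ℂ))
    (fun i => hBmeas (b i)) MB hbdB gs0 hgs0c
  obtain ⟨hS, hSle⟩ := helper_cs (fun i => ‖fs0 i‖) (fun i => ‖gs0 i‖)
    (fun i => norm_nonneg _) (fun i => norm_nonneg _) hfsum hgsum
  have hSle' : ∑' i, ‖fs0 i‖ * ‖gs0 i‖ ≤ MA * MB * ‖f‖ * ‖g‖ := by
    refine hSle.trans ?_
    have h1 : Real.sqrt (∑' i, ‖fs0 i‖ ^ 2) ≤ MA * ‖f‖ := by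
      rw [show MA * ‖f‖ = Real.sqrt ((MA * ‖f‖) ^ 2) from
        (Real.sqrt_sq (by positivity)).symm]
      exact Real.sqrt_le_sqrt (hfle.trans_eq (by ring))
    have h2 : Real.sqrt (∑' i, ‖gs0 i‖ ^ 2) ≤ MB * ‖g‖ := by
      rw [show MB * ‖g‖ = Real.sqrt ((MB * ‖g‖) ^ 2) from
        (Real.sqrt_sq (by positivity)).symm]
      exact Real.sqrt_le_sqrt (hgle.trans_eq (by ring))
    calc Real.sqrt (∑' i, ‖fs0 i‖ ^ 2) * Real.sqrt (∑' i, ‖gs0 i‖ ^ 2)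
        ≤ (MA * ‖f‖) * (MB * ‖g‖) :=
          mul_le_mul h1 h2 (Real.sqrt_nonneg _) (by positivity)
      _ = MA * MB * ‖f‖ * ‖g‖ := by ring
  -- extend to ℕ
  set e : w → ℕ := Encodable.encode with he_def
  have he : Function.Injective e := Encodable.encode_injective
  set fs : ℕ → Lp ℂ 2 μ := Function.extend e fs0 0 with hfs_def
  set gs : ℕ → Lp ℂ 2 μ := Function.extend e gs0 0 with hgs_def
  have hfs_e : ∀ i, fs (e i) = fs0 i := fun i => he.extend_apply _ _ i
  have hgs_e : ∀ i, gs (e i) = gs0 i := fun i => he.extend_apply _ _ i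
  have hfs_0 : ∀ n, (¬∃ i, e i = n) → fs n = 0 := fun n h =>
    Function.extend_apply' _ _ _ h
  have hgs_0 : ∀ n, (¬∃ i, e i = n) → gs n = 0 := fun n h =>
    Function.extend_apply' _ _ _ h
  have hNP : (fun n => ‖fs n‖ * ‖gs n‖)
      = Function.extend e (fun i => ‖fs0 i‖ * ‖gs0 i‖) 0 := by
    funext n
    by_cases h : ∃ i, e i = n
    · obtain ⟨i, rfl⟩ := h
      rw [hfs_e, hgs_e, he.extend_apply]
    · rw [hfs_0 n h, hgs_0 n h, Function.extend_apply' _ _ _ h]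
      simp
  have hHasSumN : HasSum (fun n => ‖fs n‖ * ‖gs n‖) (∑' i, ‖fs0 i‖ * ‖gs0 i‖) := by
    rw [hNP]
    exact (hasSum_extend_zero he).2 hS.hasSum
  refine ⟨fs, gs, hHasSumN.summable, hHasSumN.tsum_eq.trans_le hSle', ?_⟩
  intro x
  have hτ : MeasurePreserving (fun y : G => x⁻¹ * y) μ μ :=
    measurePreserving_mul_left μ x⁻¹
  set U : Lp ℂ 2 μ →+ Lp ℂ 2 μ := Lp.compMeasurePreserving (fun y : G => x⁻¹ * y) hτ
    with hU_def
  have hUnorm : ∀ u : Lp ℂ 2 μ, ‖U u‖ = ‖u‖ := fun u =>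
    Lp.norm_compMeasurePreserving u hτ
  have key : ∀ u v : Lp ℂ 2 μ,
      (∫ y, u (x⁻¹ * y) * conj (v y) ∂μ) = conj (⟪U u, v⟫ : ℂ) := by
    intro u v
    rw [← helper_conj_inner (U u) v]
    refine integral_congr_ae ?_
    filter_upwards [Lp.coeFn_compMeasurePreserving u hτ] with y hy
    rw [hy]
    rfl
  have hbound : ∀ n, ‖∫ y, fs n (x⁻¹ * y) * conj (gs n y) ∂μ‖ ≤ ‖fs n‖ * ‖gs n‖ := by
    intro n
    rw [key (fs n) (gs n)]
    calc ‖conj (⟪U (fs n), gs n⟫ : ℂ)‖ = ‖(⟪U (fs n), gs n⟫ : ℂ)‖ := norm_star _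
      _ ≤ ‖U (fs n)‖ * ‖gs n‖ := norm_inner_le_norm _ _
      _ = ‖fs n‖ * ‖gs n‖ := by rw [hUnorm]
  constructor
  · exact Summable.of_nonneg_of_le (fun n => norm_nonneg _) hbound hHasSumN.summable
  -- the main HasSum
  have hw2 : HasSum (fun i : w => (⟪U (fs0 i), gs0 i⟫ : ℂ))
      (conj (φ x) * (⟪U f, g⟫ : ℂ)) := by
    -- pointwise functions
    set F : w → G → ℂ := fun i y =>
      (conj ((f : G → ℂ) (x⁻¹ * y)) * (g : G → ℂ) y) *
        ((⟪B y, b i⟫ : ℂ) * (⟪b i, A (x⁻¹ * y)⟫ : ℂ)) with hF_def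
    have hφx : ∀ y : G, (⟪B y, A (x⁻¹ * y)⟫ : ℂ) = conj (φ x) := by
      intro y
      rw [← inner_conj_symm]
      congr 1
      rw [← hφ (x⁻¹ * y) y]
      congr 1
      group
    have hFhasSum : ∀ y : G, HasSum (fun i => F i y)
        ((conj ((f : G → ℂ) (x⁻¹ * y)) * (g : G → ℂ) y) * conj (φ x)) := by
      intro y
      have h := (b.hasSum_inner_mul_inner (B y) (A (x⁻¹ * y))).mul_left
        (conj ((f : G → ℂ) (x⁻¹ * y)) * (g : G → ℂ) y)
      rwa [hφx y] at h
    have hae : ∀ i : w, (fun y => (⟪((U (fs0 i)) : G → ℂ) y, ((gs0 i) : G → ℂ) y⟫ : ℂ))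
        =ᵐ[μ] F i := by
      intro i
      have h1 : ((U (fs0 i)) : G → ℂ)
          =ᵐ[μ] fun y => (f : G → ℂ) (x⁻¹ * y) * ⟪A (x⁻¹ * y), b i⟫ := by
        have h2 : U (fs0 i) = ((hfm i).comp_measurePreserving hτ).toLp _ :=
          Lp.toLp_compMeasurePreserving (hfm i) hτ
        rw [h2]
        exact MeasureTheory.MemLp.coeFn_toLp _
      filter_upwards [h1, hgs0c i] with y h1y h2y
      rw [RCLike.inner_apply, h1y, h2y, hF_def]
      simp only [map_mul, inner_conj_symm]
      ring
    have hInt : ∀ i : w, Integrable (F i) μ := fun i =>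
      (MeasureTheory.L2.integrable_inner (𝕜 := ℂ) (U (fs0 i)) (gs0 i)).congr (hae i)
    have hIval : ∀ i : w, (∫ y, F i y ∂μ) = (⟪U (fs0 i), gs0 i⟫ : ℂ) := by
      intro i
      rw [← integral_congr_ae (hae i), ← MeasureTheory.L2.inner_def]
    have hInorm : ∀ i : w, (∫ y, ‖F i y‖ ∂μ) ≤ ‖fs0 i‖ * ‖gs0 i‖ := by
      intro i
      have h1 : (∫ y, ‖F i y‖ ∂μ)
          = ∫ y, ‖((U (fs0 i)) : G → ℂ) y * conj (((gs0 i) : G → ℂ) y)‖ ∂μ := by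
        refine integral_congr_ae ?_
        filter_upwards [hae i] with y hy
        rw [← hy, RCLike.inner_apply, norm_mul, norm_mul,
          RCLike.norm_conj, RCLike.norm_conj, mul_comm]
      rw [h1, ← hUnorm (fs0 i)]
      exact helper_int_norm_le (U (fs0 i)) (gs0 i)
    have hsumnorm : Summable (fun i : w => ∫ y, ‖F i y‖ ∂μ) :=
      Summable.of_nonneg_of_le (fun i => integral_nonneg fun y => norm_nonneg _)
        hInorm hS
    have hHS := MeasureTheory.hasSum_integral_of_summable_integral_norm hInt hsumnorm
    have htarget : (∫ y, (∑' i : w, F i y) ∂μ) = conj (φ x) * (⟪U f, g⟫ : ℂ) := by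
      have h1 : ∀ y : G, (∑' i : w, F i y)
          = conj (φ x) * (conj ((f : G → ℂ) (x⁻¹ * y)) * (g : G → ℂ) y) := by
        intro y
        rw [(hFhasSum y).tsum_eq]
        ring
      have h2 : (∫ y, (∑' i : w, F i y) ∂μ)
          = ∫ y, conj (φ x) * (conj ((f : G → ℂ) (x⁻¹ * y)) * (g : G → ℂ) y) ∂μ :=
        integral_congr_ae (Filter.Eventually.of_forall h1)
      rw [h2, integral_const_mul]
      congr 1
      rw [MeasureTheory.L2.inner_def]
      refine integral_congr_ae ?_
      filter_upwards [Lp.coeFn_compMeasurePreserving f hτ] with y hy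
      rw [RCLike.inner_apply, hy]
      exact mul_comm _ _
    rw [← funext hIval, ← htarget]
    exact hHS
  have hw : HasSum (fun i : w => conj (⟪U (fs0 i), gs0 i⟫ : ℂ))
      (φ x * conj (⟪U f, g⟫ : ℂ)) := by
    have h3 := hw2.map (starRingEnd ℂ) (RCLike.continuous_conj (K := ℂ))
    have h4 : (starRingEnd ℂ) (conj (φ x) * (⟪U f, g⟫ : ℂ))
        = φ x * conj (⟪U f, g⟫ : ℂ) := by
      rw [map_mul, RCLike.conj_conj]
    rw [h4] at h3
    exact h3
  have hzero : ∀ n, n ∉ Set.range e → conj (⟪U (fs n), gs n⟫ : ℂ) = 0 := by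
    intro n hn
    have h : ¬∃ i, e i = n := by simpa [Set.mem_range] using hn
    rw [hfs_0 n h, map_zero]
    simp
  have hcomp : (fun n => conj (⟪U (fs n), gs n⟫ : ℂ)) ∘ e
      = fun i : w => conj (⟪U (fs0 i), gs0 i⟫ : ℂ) := by
    funext i
    simp only [Function.comp_apply, hfs_e, hgs_e]
  have hfinal : HasSum (fun n => conj (⟪U (fs n), gs n⟫ : ℂ))
      (φ x * conj (⟪U f, g⟫ : ℂ)) := by
    refine (Function.Injective.hasSum_iff he hzero).1 ?_
    rw [hcomp]
    exact hw
  have hkeyf : (fun n => ∫ y, fs n (x⁻¹ * y) * conj (gs n y) ∂μ)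
      = fun n => conj (⟪U (fs n), gs n⟫ : ℂ) := funext fun n => key _ _
  rw [hkeyf, key f g]
  exact hfinal
end

section
/- Let G be a locally compact second countable group, let H be a separable complex Hilbert space, and let A, B : G → H be bounded weakly measurable maps (i.e. x ↦ ⟨A(x), v⟩ is Borel measurable for every v ∈ H, and sup_{x∈G} ‖A(x)‖ < ∞, sup_{y∈G} ‖B(y)‖ < ∞). If φ : G → ℂ satisfies φ(y x⁻¹) = ⟨A(x), B(y)⟩ for all x, y ∈ G, then φ is continuous. -/
open ComplexConjugate Filter Topology
open scoped ComplexInnerProductSpace Pointwise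

universe u

open MeasureTheory

/-- Pettis: a weakly measurable map into a separable Hilbert space is measurable. -/
theorem aux_measurable_of_weakly_measurable {G : Type*} [MeasurableSpace G]
    {H : Type*} [NormedAddCommGroup H] [InnerProductSpace ℂ H] [CompleteSpace H]
    [TopologicalSpace.SeparableSpace H]
    [MeasurableSpace H] [BorelSpace H]
    (B : G → H) (hBmeas : ∀ v : H, Measurable fun y : G => ⟪B y, v⟫) :
    Measurable B := by
  haveI : SecondCountableTopology H := by infer_instance
  haveI : PolishSpace H := by infer_instance
  obtain ⟨u, hu⟩ : ∃ u : ℕ → H, DenseRange u := TopologicalSpace.exists_dense_seq H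
  set J : H → (ℕ → ℂ) := fun w n => ⟪u n, w⟫ with hJ
  have hJc : Continuous J := continuous_pi fun n => (innerSL ℂ (u n)).continuous
  have hJi : Function.Injective J := by
    intro w w' h
    have h0 : ∀ n, ⟪u n, w - w'⟫ = 0 := by
      intro n
      rw [inner_sub_right, sub_eq_zero]
      exact congrFun h n
    have hall : ∀ v : H, ⟪v, w - w'⟫ = 0 := by
      intro v
      have hcl : IsClosed {v : H | ⟪v, w - w'⟫ = 0} :=
        isClosed_eq (continuous_id.inner continuous_const) continuous_const
      have hsub : Set.range u ⊆ {v : H | ⟪v, w - w'⟫ = 0} := by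
        rintro _ ⟨n, rfl⟩; exact h0 n
      exact hcl.closure_subset_iff.mpr hsub (hu v)
    have := hall (w - w')
    rw [inner_self_eq_zero] at this
    exact sub_eq_zero.mp this
  have hemb : MeasurableEmbedding J := hJc.measurableEmbedding hJi
  have : Measurable (J ∘ B) := by
    refine measurable_pi_iff.mpr fun n => ?_
    have : (fun y => (⟪u n, B y⟫ : ℂ)) = fun y => conj ⟪B y, u n⟫ := by
      ext y; rw [← inner_conj_symm]
    simpa [J, Function.comp_def, this] using
      (Complex.continuous_conj.measurable).comp (hBmeas (u n))
  exact hemb.measurable_comp_iff.mp this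

/-- If `φ (y * x⁻¹) = ⟪A x, B y⟫` for bounded weakly measurable maps
`A B : G → H` into a separable Hilbert space, then `φ` is continuous. -/
theorem continuous_of_weakly_measurable_factorization
    {G : Type*} [Group G] [TopologicalSpace G] [IsTopologicalGroup G]
    [LocallyCompactSpace G] [SecondCountableTopology G]
    [MeasurableSpace G] [BorelSpace G]
    {H : Type*} [NormedAddCommGroup H] [InnerProductSpace ℂ H] [CompleteSpace H]
    [TopologicalSpace.SeparableSpace H]
    (A B : G → H) (MA MB : ℝ)
    (hAmeas : ∀ v : H, Measurable fun x : G => ⟪A x, v⟫)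
    (hBmeas : ∀ v : H, Measurable fun y : G => ⟪B y, v⟫)
    (hA : ∀ x : G, ‖A x‖ ≤ MA) (hB : ∀ y : G, ‖B y‖ ≤ MB)
    (φ : G → ℂ) (hφ : ∀ x y : G, φ (y * x⁻¹) = ⟪A x, B y⟫) :
    Continuous φ := by
  borelize H
  have hMA0 : 0 ≤ MA := le_trans (norm_nonneg _) (hA 1)
  have measA : Measurable A := aux_measurable_of_weakly_measurable A hAmeas
  have measB : Measurable B := aux_measurable_of_weakly_measurable B hBmeas
  have smB : StronglyMeasurable B := measB.stronglyMeasurable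
  set μ : Measure G := Measure.haar with hμ
  haveI : Fact ((1 : ENNReal) ≤ 1) := ⟨le_refl _⟩
  haveI : Fact ((1 : ENNReal) ≠ ⊤) := ⟨by simp⟩
  rw [continuous_iff_continuousAt]
  intro g₀
  obtain ⟨K₀, hK₀c, hK₀n⟩ := exists_compact_mem_nhds (1 : G)
  set K : Set G := closure K₀ with hKdef
  have hKc : IsCompact K := hK₀c.closure
  have hKn : K ∈ 𝓝 1 := Filter.mem_of_superset hK₀n subset_closure
  have hKm : MeasurableSet K := isClosed_closure.measurableSet
  have hμKlt : μ K < ⊤ := hKc.measure_lt_top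
  have hμKpos : 0 < μ K := hμ ▸ MeasureTheory.Measure.measure_pos_of_mem_nhds (μ := μ) hKn
  set c : ℝ := (μ K).toReal with hcdef
  have hc : 0 < c := ENNReal.toReal_pos hμKpos.ne' hμKlt.ne
  obtain ⟨V, hVc, hVn⟩ := exists_compact_mem_nhds g₀
  set K' : Set G := closure (V * K) with hK'def
  have hK'c : IsCompact K' := (hVc.mul hKc).closure
  have hK'm : MeasurableSet K' := isClosed_closure.measurableSet
  have hμK'lt : μ K' < ⊤ := hK'c.measure_lt_top
  set f : G → H := K'.indicator B with hfdef
  have hfsm : StronglyMeasurable f := smB.indicator hK'm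
  have hfbound : ∀ y, ‖f y‖ ≤ K'.indicator (fun _ => MB) y := by
    intro y
    by_cases hy : y ∈ K' <;>
      simp [f, Set.indicator_of_mem, Set.indicator_of_notMem, hy, hB y]
  have hgint : Integrable (K'.indicator (fun _ => MB)) μ := by
    rw [integrable_indicator_iff hK'm]
    exact (integrableOn_const_iff).mpr (Or.inr hμK'lt)
  have hfi : Integrable f μ :=
    Integrable.mono' hgint hfsm.aestronglyMeasurable
      (Filter.Eventually.of_forall hfbound)
  set F : Lp H 1 μ := hfi.toL1 f with hFdef
  set D : G → Lp H 1 μ := fun g => (DomMulAct.mk g) • F - (DomMulAct.mk g₀) • F with hDdef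
  have hDcont : Continuous D := by
    have h1 : Continuous fun g : G => (DomMulAct.mk g : Gᵈᵐᵃ) • F :=
      continuous_smul.comp ((DomMulAct.mkHomeomorph (M := G)).continuous.prodMk continuous_const)
    exact h1.sub continuous_const
  have hcomp : ∀ g : G, (((DomMulAct.mk g : Gᵈᵐᵃ) • F : Lp H 1 μ) : G → H) =ᵐ[μ] fun x => f (g * x) := by
    intro g
    refine (DomMulAct.smul_Lp_ae_eq _ _).trans ?_
    have hF : (F : G → H) =ᵐ[μ] f := hfi.coeFn_toL1
    have := (measurePreserving_mul_left μ g).quasiMeasurePreserving.ae_eq_comp hF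
    simpa [Function.comp_def] using this
  have hae : ∀ g : G, (D g : G → H) =ᵐ[μ] fun x => f (g * x) - f (g₀ * x) := by
    intro g
    refine (Lp.coeFn_sub _ _).trans ?_
    filter_upwards [hcomp g, hcomp g₀] with x h1 h2
    simp only [Pi.sub_apply, h1, h2]
  haveI : IsFiniteMeasure (μ.restrict K) :=
    ⟨by rw [Measure.restrict_apply_univ]; exact hμKlt⟩
  set Φ : G → ℂ := fun g => ∫ x in K, (⟪A x, f (g * x)⟫ : ℂ) ∂μ with hΦdef
  have hint : ∀ g : G, IntegrableOn (fun x => (⟪A x, f (g * x)⟫ : ℂ)) K μ := by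
    intro g
    refine Integrable.mono' (integrable_const (MA * MB)) ?_
      (Filter.Eventually.of_forall fun x => ?_)
    · exact (measA.aestronglyMeasurable.restrict).inner
        ((hfsm.comp_measurable (measurable_const_mul g)).aestronglyMeasurable.restrict)
    · refine (norm_inner_le_norm _ _).trans ?_
      have hfb : ‖f (g * x)‖ ≤ MB := by
        by_cases hy : g * x ∈ K' <;>
          simp [f, Set.indicator_of_mem, Set.indicator_of_notMem, hy, hB (g * x),
            le_trans (norm_nonneg (B 1)) (hB 1)]
      exact mul_le_mul (hA x) hfb (norm_nonneg _) hMA0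
  have hΦeq : ∀ g ∈ V, Φ g = c • φ g := by
    intro g hg
    have h1 : Φ g = ∫ x in K, (⟪A x, B (g * x)⟫ : ℂ) ∂μ := by
      refine setIntegral_congr_fun hKm fun x hx => ?_
      have : g * x ∈ K' := subset_closure (Set.mul_mem_mul hg hx)
      simp [f, Set.indicator_of_mem this]
    have h2 : ∀ x : G, (⟪A x, B (g * x)⟫ : ℂ) = φ g := by
      intro x
      rw [← hφ x (g * x), mul_inv_cancel_right]
    rw [h1]
    simp only [h2]
    rw [setIntegral_const]
    rfl
  have hDg₀ : D g₀ = 0 := sub_self _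
  have hbound : ∀ g : G, ‖Φ g - Φ g₀‖ ≤ MA * ‖D g‖ := by
    intro g
    have hDi : Integrable (D g : G → H) μ := L1.integrable_coeFn (D g)
    have hsub : Φ g - Φ g₀ = ∫ x in K, (⟪A x, (D g : G → H) x⟫ : ℂ) ∂μ := by
      rw [hΦdef]
      simp only
      rw [← integral_sub (hint g) (hint g₀)]
      refine integral_congr_ae ?_
      filter_upwards [ae_restrict_of_ae (hae g)] with x hx
      rw [hx, inner_sub_right]
    rw [hsub]
    calc ‖∫ x in K, (⟪A x, (D g : G → H) x⟫ : ℂ) ∂μ‖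
        ≤ ∫ x in K, ‖(⟪A x, (D g : G → H) x⟫ : ℂ)‖ ∂μ := norm_integral_le_integral_norm _
      _ ≤ ∫ x in K, MA * ‖(D g : G → H) x‖ ∂μ := by
          refine integral_mono_of_nonneg (Filter.Eventually.of_forall fun x => norm_nonneg _)
            ((hDi.norm.const_mul MA).restrict) (Filter.Eventually.of_forall fun x => ?_)
          exact (norm_inner_le_norm _ _).trans
            (mul_le_mul_of_nonneg_right (hA x) (norm_nonneg _))
      _ ≤ ∫ x, MA * ‖(D g : G → H) x‖ ∂μ := by
          refine setIntegral_le_integral (hDi.norm.const_mul MA) ?_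
          exact Filter.Eventually.of_forall fun x => mul_nonneg hMA0 (norm_nonneg _)
      _ = MA * ∫ x, ‖(D g : G → H) x‖ ∂μ := integral_const_mul MA _
      _ = MA * ‖D g‖ := by rw [L1.norm_eq_integral_norm]
  have htend0 : Filter.Tendsto (fun g => MA * ‖D g‖) (𝓝 g₀) (𝓝 0) := by
    have : Filter.Tendsto (fun g => MA * ‖D g‖) (𝓝 g₀) (𝓝 (MA * ‖D g₀‖)) :=
      ((continuous_const.mul hDcont.norm).tendsto g₀)
    simpa [hDg₀] using this
  have hΦtend : Filter.Tendsto Φ (𝓝 g₀) (𝓝 (Φ g₀)) := by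
    rw [tendsto_iff_norm_sub_tendsto_zero]
    exact squeeze_zero (fun g => norm_nonneg _) hbound htend0
  have hcont : ContinuousAt (fun g => c⁻¹ • Φ g) g₀ := hΦtend.const_smul c⁻¹
  have heq : (fun g => c⁻¹ • Φ g) =ᶠ[𝓝 g₀] φ := by
    filter_upwards [hVn] with g hg
    rw [hΦeq g hg, inv_smul_smul₀ hc.ne']
  exact (hcont.congr heq)
end

section
/- Let G be a locally compact group, d ≥ 2 an integer, and let φ : G → ℂ be a nonzero M_d-multiplier admitting a factorization (H₀, …, H_d; ξ₁, …, ξ_d) of length d. Then there exists another factorization (H₀', …, H_d'; ξ₁', …, ξ_d') of φ with sup_{x∈G} ‖ξᵢ'(x)‖ ≤ sup_{x∈G} ‖ξᵢ(x)‖ for each i, such that for every i = 1, …, d−1 the sets Aᵢ' = {ξ'_{i+1}(x_{i+1})⋯ξ'_d(x_d)(1) : x_{i+1}, …, x_d ∈ G} and Bᵢ' = {(ξ'₁(x₁)⋯ξ'ᵢ(xᵢ))*(1) : x₁, …, xᵢ ∈ G} are total in Hᵢ' (their closed linear spans equal Hᵢ'). -/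
open ComplexConjugate Filter Topology
open scoped ComplexInnerProductSpace

universe u

open scoped ComplexInnerProductSpace

section Hilbert

variable {H : Type*} [NormedAddCommGroup H] [InnerProductSpace ℂ H] [CompleteSpace H]
variable {H' : Type*} [NormedAddCommGroup H'] [InnerProductSpace ℂ H'] [CompleteSpace H']

/-- The isometry from a submodule equal to `⊤` onto the ambient space. -/
noncomputable def topLIE (S : Submodule ℂ H) (h : S = ⊤) : S ≃ₗᵢ[ℂ] H :=
  { LinearEquiv.ofTop S h with norm_map' := fun _ => rfl }

@[simp] theorem topLIE_apply (S : Submodule ℂ H) (h : S = ⊤) (v : S) :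
    topLIE S h v = (v : H) := rfl

@[simp] theorem topLIE_symm_coe (S : Submodule ℂ H) (h : S = ⊤) (w : H) :
    ((topLIE S h).symm w : H) = w := by
  conv_rhs => rw [← (topLIE S h).apply_symm_apply w]
  rfl

/-- The orthogonal projection onto a closed submodule. -/
noncomputable def projL (S : Submodule ℂ H) (hcl : IsClosed (S : Set H)) : H →L[ℂ] S :=
  haveI := hcl.completeSpace_coe
  S.orthogonalProjectionOnto

theorem projL_coe_eq_self (S : Submodule ℂ H) (hcl : IsClosed (S : Set H)) {v : H}
    (hv : v ∈ S) : (projL S hcl v : H) = v := by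
  haveI := hcl.completeSpace_coe
  exact (Submodule.starProjection_eq_self_iff (K := S)).2 hv

theorem projL_eq_zero (S : Submodule ℂ H) (hcl : IsClosed (S : Set H)) {v : H}
    (hv : v ∈ Sᗮ) : projL S hcl v = 0 := by
  haveI := hcl.completeSpace_coe
  exact Submodule.orthogonalProjectionOnto_apply_of_mem_orthogonal hv

theorem sub_projL_mem_orthogonal (S : Submodule ℂ H) (hcl : IsClosed (S : Set H)) (v : H) :
    v - projL S hcl v ∈ Sᗮ := by
  haveI := hcl.completeSpace_coe
  exact Submodule.sub_starProjection_mem_orthogonal (K := S) v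

theorem norm_projL_apply_le (S : Submodule ℂ H) (hcl : IsClosed (S : Set H)) (v : H) :
    ‖projL S hcl v‖ ≤ ‖v‖ := by
  haveI := hcl.completeSpace_coe
  calc ‖projL S hcl v‖ ≤ ‖projL S hcl‖ * ‖v‖ := (projL S hcl).le_opNorm v
  _ ≤ 1 * ‖v‖ := by
      exact mul_le_mul_of_nonneg_right (Submodule.orthogonalProjectionOnto_norm_le S) (norm_nonneg v)
  _ = ‖v‖ := one_mul _

theorem projL_surjective (S : Submodule ℂ H) (hcl : IsClosed (S : Set H)) :
    Function.Surjective (projL S hcl) := fun w =>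
  ⟨(w : H), Subtype.ext (projL_coe_eq_self S hcl w.2)⟩

/-- A submodule containing a nonzero vector of a space isometric to `ℂ` is everything. -/
theorem eq_top_of_mem_ne_zero (e : H ≃ₗᵢ[ℂ] ℂ) {S : Submodule ℂ H} {v : H}
    (hv : v ∈ S) (hv0 : v ≠ 0) : S = ⊤ := by
  rw [eq_top_iff]
  intro w _
  have hev : e v ≠ 0 := fun h => hv0 (by simpa using e.map_eq_zero_iff.1 h)
  have : w = (e w / e v) • v := by
    apply e.injective
    rw [e.map_smul, smul_eq_mul, div_mul_cancel₀ _ hev]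
  rw [this]
  exact S.smul_mem _ hv

/-- Density of a spanning set transfers to the corresponding subtype. -/
theorem span_subtype_dense {S : Submodule ℂ H} (s : Set S)
    (hs : S ≤ (Submodule.span ℂ (((↑) : S → H) '' s)).topologicalClosure) :
    (Submodule.span ℂ s).topologicalClosure = ⊤ := by
  rw [Submodule.eq_top_iff']
  intro v
  have key : ((v : H)) ∈ closure (((↑) : S → H) '' (Submodule.span ℂ s : Set S)) := by
    have himg : (((↑) : S → H) '' (Submodule.span ℂ s : Set S))
        = ((Submodule.span ℂ s).map S.subtype : Set H) := rfl
    rw [himg, ← Submodule.span_image]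
    exact hs v.2
  have : v ∈ closure ((Submodule.span ℂ s : Submodule ℂ S) : Set S) := by
    rw [Topology.IsInducing.subtypeVal.closure_eq_preimage_closure_image]
    exact key
  exact this

/-- Density of a span transfers through a surjective continuous linear map. -/
theorem span_image_dense {s : Set H} (hs : (Submodule.span ℂ s).topologicalClosure = ⊤)
    (f : H →L[ℂ] H') (hf : Function.Surjective f) :
    (Submodule.span ℂ (f '' s)).topologicalClosure = ⊤ := by
  rw [Submodule.eq_top_iff']
  intro w
  obtain ⟨v, rfl⟩ := hf w
  have hv : v ∈ closure ((Submodule.span ℂ s : Submodule ℂ H) : Set H) := by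
    have := congrArg (fun K : Submodule ℂ H => (K : Set H)) hs
    simp only [Submodule.topologicalClosure_coe, Submodule.top_coe] at this
    rw [this]; trivial
  refine map_mem_closure f.continuous hv fun u hu => ?_
  exact Submodule.apply_mem_span_image_of_mem_span (f : H →ₗ[ℂ] H') hu

end Hilbert

theorem exists_ofFn_prod {G : Type*} [Group G] {d : ℕ} (hd : 0 < d) (g : G) :
    ∃ x : Fin d → G, (List.ofFn x).prod = g := by
  obtain ⟨e, rfl⟩ := Nat.exists_eq_succ_of_ne_zero hd.ne'
  exact ⟨Fin.cons g 1, by simp [List.ofFn_succ]⟩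
namespace Factorization

open ContinuousLinearMap

variable {d : ℕ} {G : Type*} [Group G] {φ : G → ℂ}

theorem rightVec_last (F : Factorization.{u} d G φ) (x : Fin d → G) :
    F.rightVec x (Fin.last d) = F.ed.symm 1 :=
  Fin.reverseInduction_last ..

theorem rightVec_castSucc (F : Factorization.{u} d G φ) (x : Fin d → G) (j : Fin d) :
    F.rightVec x j.castSucc = F.xi j (x j) (F.rightVec x j.succ) :=
  Fin.reverseInduction_castSucc ..

theorem leftVec_zero (F : Factorization.{u} d G φ) (x : Fin d → G) :
    F.leftVec x 0 = F.e0.symm 1 := rfl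

theorem leftVec_succ (F : Factorization.{u} d G φ) (x : Fin d → G) (j : Fin d) :
    F.leftVec x j.succ = adjoint (F.xi j (x j)) (F.leftVec x j.castSucc) := rfl

theorem factor' (F : Factorization.{u} d G φ) (x : Fin d → G) :
    φ (List.ofFn x).prod = F.e0 (F.rightVec x 0) := F.factor x

theorem rightVec_congr (F : Factorization.{u} d G φ) (x y : Fin d → G) :
    ∀ i : Fin (d + 1), (∀ j : Fin d, i ≤ j.castSucc → x j = y j) →
      F.rightVec x i = F.rightVec y i := by
  intro i
  induction i using Fin.reverseInduction with
  | last => intro _; rw [rightVec_last, rightVec_last]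
  | cast j ih =>
    intro h
    rw [rightVec_castSucc, rightVec_castSucc, h j le_rfl,
      ih fun k hk => h k ((Fin.castSucc_lt_succ (i := j)).le.trans hk)]

theorem leftVec_congr (F : Factorization.{u} d G φ) (x y : Fin d → G) :
    ∀ i : Fin (d + 1), (∀ j : Fin d, j.castSucc < i → x j = y j) →
      F.leftVec x i = F.leftVec y i := by
  intro i
  induction i using Fin.induction with
  | zero => intro _; rfl
  | succ j ih =>
    intro h
    rw [leftVec_succ, leftVec_succ, h j (Fin.castSucc_lt_succ (i := j)),
      ih fun k hk => h k (hk.trans (Fin.castSucc_lt_succ (i := j)))]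

theorem xi_rightVec (F : Factorization.{u} d G φ) (x : Fin d → G) (j : Fin d) (g : G) :
    F.xi j g (F.rightVec x j.succ) = F.rightVec (Function.update x j g) j.castSucc := by
  rw [rightVec_castSucc, Function.update_self,
    F.rightVec_congr x (Function.update x j g) j.succ fun k hk =>
      (Function.update_of_ne (fun hkj => by
        subst hkj
        exact absurd hk (by simpa using (Fin.castSucc_lt_succ (i := k)).not_ge)) g x).symm]

theorem adjoint_xi_leftVec (F : Factorization.{u} d G φ) (x : Fin d → G) (j : Fin d) (g : G) :
    adjoint (F.xi j g) (F.leftVec x j.castSucc) = F.leftVec (Function.update x j g) j.succ := by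
  rw [leftVec_succ, Function.update_self,
    F.leftVec_congr x (Function.update x j g) j.castSucc fun k hk =>
      (Function.update_of_ne (fun hkj => by
        subst hkj; exact lt_irrefl _ hk) g x).symm]

theorem inner_leftVec_rightVec (F : Factorization.{u} d G φ) (x : Fin d → G) :
    ∀ i : Fin (d + 1), ⟪F.leftVec x i, F.rightVec x i⟫ = φ (List.ofFn x).prod := by
  intro i
  induction i using Fin.induction with
  | zero =>
    rw [leftVec_zero, F.factor' x, ← F.e0.inner_map_map, F.e0.apply_symm_apply]
    simp [RCLike.inner_apply]
  | succ j ih =>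
    rw [leftVec_succ, adjoint_inner_left, ← rightVec_castSucc, ih]

end Factorization

namespace Factorization

open ContinuousLinearMap

variable {d : ℕ} {G : Type*} [Group G] {φ : G → ℂ}

/-- The compression of `xi` to a family of closed submodules. -/
noncomputable def restrictXi (F : Factorization.{u} d G φ) (S : ∀ i, Submodule ℂ (F.H i))
    (hcl : ∀ i, IsClosed ((S i : Set (F.H i)))) (j : Fin d) (g : G) :
    (S j.succ) →L[ℂ] (S j.castSucc) :=
  (projL (S j.castSucc) (hcl _)).comp ((F.xi j g).comp (S j.succ).subtypeL)

theorem norm_restrictXi_le (F : Factorization.{u} d G φ) (S : ∀ i, Submodule ℂ (F.H i))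
    (hcl : ∀ i, IsClosed ((S i : Set (F.H i)))) (j : Fin d) (g : G) :
    ‖restrictXi F S hcl j g‖ ≤ ‖F.xi j g‖ := by
  refine ContinuousLinearMap.opNorm_le_bound _ (norm_nonneg _) fun v => ?_
  calc ‖restrictXi F S hcl j g v‖
      = ‖projL (S j.castSucc) (hcl _) (F.xi j g (v : F.H j.succ))‖ := rfl
    _ ≤ ‖F.xi j g (v : F.H j.succ)‖ := norm_projL_apply_le _ _ _
    _ ≤ ‖F.xi j g‖ * ‖v‖ := (F.xi j g).le_opNorm _

/-- The right vectors of the compressed factorization, defined standalone. -/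
noncomputable def restrictRightVec (F : Factorization.{u} d G φ) (S : ∀ i, Submodule ℂ (F.H i))
    (hcl : ∀ i, IsClosed ((S i : Set (F.H i)))) (hdm : F.ed.symm 1 ∈ S (Fin.last d))
    (x : Fin d → G) (i : Fin (d + 1)) : S i :=
  Fin.reverseInduction (motive := fun i => S i) ⟨F.ed.symm 1, hdm⟩
    (fun j v => restrictXi F S hcl j (x j) v) i

theorem restrictRightVec_last (F : Factorization.{u} d G φ) (S : ∀ i, Submodule ℂ (F.H i))
    (hcl : ∀ i, IsClosed ((S i : Set (F.H i)))) (hdm : F.ed.symm 1 ∈ S (Fin.last d))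
    (x : Fin d → G) :
    restrictRightVec F S hcl hdm x (Fin.last d) = ⟨F.ed.symm 1, hdm⟩ :=
  Fin.reverseInduction_last ..

theorem restrictRightVec_castSucc (F : Factorization.{u} d G φ) (S : ∀ i, Submodule ℂ (F.H i))
    (hcl : ∀ i, IsClosed ((S i : Set (F.H i)))) (hdm : F.ed.symm 1 ∈ S (Fin.last d))
    (x : Fin d → G) (j : Fin d) :
    restrictRightVec F S hcl hdm x j.castSucc
      = restrictXi F S hcl j (x j) (restrictRightVec F S hcl hdm x j.succ) :=
  Fin.reverseInduction_castSucc ..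

/-- Case A: if the submodules contain all right vectors, the compressed right vectors agree
with the original ones. -/
theorem restrictRightVec_coe_of_mem (F : Factorization.{u} d G φ) (S : ∀ i, Submodule ℂ (F.H i))
    (hcl : ∀ i, IsClosed ((S i : Set (F.H i)))) (hdm : F.ed.symm 1 ∈ S (Fin.last d))
    (hmem : ∀ (x : Fin d → G) (i : Fin (d + 1)), F.rightVec x i ∈ S i) (x : Fin d → G) :
    ∀ i : Fin (d + 1), (restrictRightVec F S hcl hdm x i : F.H i) = F.rightVec x i := by
  intro i
  induction i using Fin.reverseInduction with
  | last => rw [restrictRightVec_last, rightVec_last]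
  | cast j ih =>
    rw [restrictRightVec_castSucc, rightVec_castSucc]
    show (projL (S j.castSucc) (hcl _)
      (F.xi j (x j) ((restrictRightVec F S hcl hdm x j.succ : F.H j.succ))) : F.H j.castSucc) = _
    rw [ih, ← rightVec_castSucc]
    exact projL_coe_eq_self _ _ (hmem x _)

/-- Case B: if the adjoints map the submodules forward, the compressed right vectors are the
projections of the original ones. -/
theorem restrictRightVec_eq_projL (F : Factorization.{u} d G φ) (S : ∀ i, Submodule ℂ (F.H i))
    (hcl : ∀ i, IsClosed ((S i : Set (F.H i)))) (hdm : F.ed.symm 1 ∈ S (Fin.last d))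
    (hadj : ∀ (j : Fin d) (g : G) (w : F.H j.castSucc), w ∈ S j.castSucc →
      adjoint (F.xi j g) w ∈ S j.succ) (x : Fin d → G) :
    ∀ i : Fin (d + 1), restrictRightVec F S hcl hdm x i = projL (S i) (hcl i) (F.rightVec x i) := by
  intro i
  induction i using Fin.reverseInduction with
  | last =>
    rw [restrictRightVec_last, rightVec_last]
    exact Subtype.ext (projL_coe_eq_self _ _ hdm).symm
  | cast j ih =>
    rw [restrictRightVec_castSucc, ih, rightVec_castSucc]
    set v := F.rightVec x j.succ with hv
    have hrfl : restrictXi F S hcl j (x j) (projL (S j.succ) (hcl _) v)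
        = projL (S j.castSucc) (hcl _) (F.xi j (x j) ((projL (S j.succ) (hcl _) v : F.H j.succ))) :=
      rfl
    have hsplit : F.xi j (x j) ((projL (S j.succ) (hcl _) v : F.H j.succ))
        = F.xi j (x j) v - F.xi j (x j) (v - (projL (S j.succ) (hcl _) v : F.H j.succ)) := by
      rw [map_sub, sub_sub_cancel]
    have key : projL (S j.castSucc) (hcl _)
        (F.xi j (x j) (v - (projL (S j.succ) (hcl _) v : F.H j.succ))) = 0 := by
      refine projL_eq_zero _ _ ?_
      rw [Submodule.mem_orthogonal]
      intro u hu
      rw [← ContinuousLinearMap.adjoint_inner_left]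
      exact (Submodule.mem_orthogonal _ _).1 (sub_projL_mem_orthogonal (S j.succ) (hcl _) v) _
        (hadj j (x j) u hu)
    rw [hrfl, hsplit, map_sub, key, sub_zero]

/-- The compressed factorization along a family of closed submodules. -/
noncomputable def restrict (F : Factorization.{u} d G φ) (S : ∀ i, Submodule ℂ (F.H i))
    (hcl : ∀ i, IsClosed ((S i : Set (F.H i))))
    (h0 : S 0 = ⊤) (hd : S (Fin.last d) = ⊤)
    (hfac : ∀ x : Fin d → G, φ (List.ofFn x).prod
      = F.e0 (restrictRightVec F S hcl (hd.ge Submodule.mem_top) x 0 : F.H 0)) :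
    Factorization.{u} d G φ where
  H i := S i
  e0 := (topLIE (S 0) h0).trans F.e0
  ed := (topLIE (S (Fin.last d)) hd).trans F.ed
  xi j g := restrictXi F S hcl j g
  complete i := (hcl i).completeSpace_coe
  bdd j := (F.bdd j).imp fun M hM g => (norm_restrictXi_le F S hcl j g).trans (hM g)
  factor x := by
    have hbase : ((topLIE (S (Fin.last d)) hd).trans F.ed).symm 1
        = (⟨F.ed.symm 1, hd.ge Submodule.mem_top⟩ : S (Fin.last d)) := by
      apply Subtype.ext
      simp
    rw [hbase]
    exact hfac x

theorem restrict_rightVec (F : Factorization.{u} d G φ) (S : ∀ i, Submodule ℂ (F.H i))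
    (hcl : ∀ i, IsClosed ((S i : Set (F.H i))))
    (h0 : S 0 = ⊤) (hd : S (Fin.last d) = ⊤) (hfac) (x : Fin d → G) :
    ∀ i : Fin (d + 1), (F.restrict S hcl h0 hd hfac).rightVec x i
      = restrictRightVec F S hcl (hd.ge Submodule.mem_top) x i := by
  intro i
  induction i using Fin.reverseInduction with
  | last =>
    rw [rightVec_last, restrictRightVec_last]
    apply Subtype.ext
    show (((topLIE (S (Fin.last d)) hd).trans F.ed).symm 1 : F.H (Fin.last d)) = F.ed.symm 1
    simp
  | cast j ih =>
    rw [rightVec_castSucc, restrictRightVec_castSucc, ih]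
    rfl

theorem restrict_adjoint_xi (F : Factorization.{u} d G φ) (S : ∀ i, Submodule ℂ (F.H i))
    (hcl : ∀ i, IsClosed ((S i : Set (F.H i))))
    (h0 : S 0 = ⊤) (hd : S (Fin.last d) = ⊤) (hfac) (j : Fin d) (g : G) :
    adjoint ((F.restrict S hcl h0 hd hfac).xi j g)
      = (projL (S j.succ) (hcl _)).comp ((adjoint (F.xi j g)).comp (S j.castSucc).subtypeL) := by
  haveI := (hcl j.succ).completeSpace_coe
  haveI := (hcl j.castSucc).completeSpace_coe
  show adjoint ((projL (S j.castSucc) (hcl _)).comp ((F.xi j g).comp (S j.succ).subtypeL)) = _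
  rw [adjoint_comp, adjoint_comp, Submodule.adjoint_subtypeL,
    show adjoint (projL (S j.castSucc) (hcl _)) = (S j.castSucc).subtypeL from
      Submodule.adjoint_orthogonalProjection _,
    ← ContinuousLinearMap.comp_assoc]
  rfl

theorem restrict_leftVec_coe (F : Factorization.{u} d G φ) (S : ∀ i, Submodule ℂ (F.H i))
    (hcl : ∀ i, IsClosed ((S i : Set (F.H i))))
    (h0 : S 0 = ⊤) (hd : S (Fin.last d) = ⊤) (hfac)
    (hmemL : ∀ (x : Fin d → G) (i : Fin (d + 1)), F.leftVec x i ∈ S i) (x : Fin d → G) :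
    ∀ i : Fin (d + 1),
      (S i).subtype ((F.restrict S hcl h0 hd hfac).leftVec x i) = F.leftVec x i := by
  intro i
  induction i using Fin.induction with
  | zero =>
    rw [leftVec_zero, leftVec_zero]
    show (((topLIE (S 0) h0).trans F.e0).symm 1 : F.H 0) = F.e0.symm 1
    simp
  | succ j ih =>
    rw [leftVec_succ, leftVec_succ, restrict_adjoint_xi]
    show ((projL (S j.succ) (hcl _)
        (adjoint (F.xi j (x j))
          ((S j.castSucc).subtype ((F.restrict S hcl h0 hd hfac).leftVec x j.castSucc)))
      : F.H j.succ)) = _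
    rw [ih, ← leftVec_succ]
    exact projL_coe_eq_self _ _ (hmemL x _)

end Factorization
open MeasureTheory

/-- A nonzero `M_d`-multiplier with a given factorization admits a
factorization with no larger constants in which the sets `Aᵢ'` and `Bᵢ'` are total in
`Hᵢ'` for `i = 1, …, d-1`. -/
theorem exists_factorization_total
    {G : Type*} [Group G] [TopologicalSpace G] [IsTopologicalGroup G] [LocallyCompactSpace G]
    (d : ℕ) (hd : 2 ≤ d)
    (φ : G → ℂ) (hφ : IsMdMultiplier d φ) (hφne : φ ≠ 0)
    (F : Factorization.{u} d G φ) :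
    ∃ F' : Factorization.{u} d G φ,
      (∀ i : Fin d, (⨆ x : G, ‖F'.xi i x‖) ≤ ⨆ x : G, ‖F.xi i x‖) ∧
      ∀ i : Fin (d + 1), i ≠ 0 → i ≠ Fin.last d →
        (Submodule.span ℂ
            (Set.range fun x : Fin d → G => F'.rightVec x i)).topologicalClosure = ⊤ ∧
        (Submodule.span ℂ
            (Set.range fun x : Fin d → G => F'.leftVec x i)).topologicalClosure = ⊤ := by
  classical
  obtain ⟨g, hg⟩ : ∃ g : G, φ g ≠ 0 := by
    by_contra h
    push_neg at h
    exact hφne (funext fun g => h g)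
  obtain ⟨x₀, hx₀⟩ := exists_ofFn_prod (lt_of_lt_of_le two_pos hd) g
  have hφx₀ : φ (List.ofFn x₀).prod ≠ 0 := by rwa [hx₀]
  -- Step 1: compress to the closed spans of the right vectors.
  set S : ∀ i : Fin (d + 1), Submodule ℂ (F.H i) := fun i =>
    (Submodule.span ℂ (Set.range fun x : Fin d → G => F.rightVec x i)).topologicalClosure
    with hS
  have hcl : ∀ i, IsClosed ((S i : Set (F.H i))) := fun i =>
    Submodule.isClosed_topologicalClosure _
  have hmem : ∀ (x : Fin d → G) (i : Fin (d + 1)), F.rightVec x i ∈ S i := fun x i =>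
    Submodule.le_topologicalClosure _ (Submodule.subset_span (Set.mem_range_self x))
  have h0 : S 0 = ⊤ := by
    refine eq_top_of_mem_ne_zero F.e0 (hmem x₀ 0) fun h => hφx₀ ?_
    rw [F.factor' x₀, h, map_zero]
  have hd1 : S (Fin.last d) = ⊤ := by
    refine eq_top_of_mem_ne_zero F.ed (hmem x₀ _) fun h => one_ne_zero (α := ℂ) ?_
    rw [F.rightVec_last x₀] at h
    calc (1 : ℂ) = F.ed (F.ed.symm 1) := (F.ed.apply_symm_apply 1).symm
    _ = 0 := by rw [h, map_zero]
  have hfac1 : ∀ x : Fin d → G, φ (List.ofFn x).prod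
      = F.e0 (Factorization.restrictRightVec F S hcl (hd1.ge Submodule.mem_top) x 0 : F.H 0) := by
    intro x
    rw [Factorization.restrictRightVec_coe_of_mem F S hcl _ hmem x 0]
    exact F.factor' x
  set F1 : Factorization.{u} d G φ := F.restrict S hcl h0 hd1 hfac1 with hF1
  have hright1coe : ∀ (x : Fin d → G) (i : Fin (d + 1)),
      (S i).subtype (F1.rightVec x i) = F.rightVec x i := by
    intro x i
    rw [show F1.rightVec x i
        = Factorization.restrictRightVec F S hcl (hd1.ge Submodule.mem_top) x i from
      Factorization.restrict_rightVec F S hcl h0 hd1 hfac1 x i]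
    exact Factorization.restrictRightVec_coe_of_mem F S hcl _ hmem x i
  have hxi1 : ∀ (j : Fin d) (g' : G), ‖F1.xi j g'‖ ≤ ‖F.xi j g'‖ := fun j g' =>
    Factorization.norm_restrictXi_le F S hcl j g'
  -- right vectors of F1 are total at every index
  have hright1 : ∀ i : Fin (d + 1),
      (Submodule.span ℂ (Set.range fun x : Fin d → G => F1.rightVec x i)).topologicalClosure
        = ⊤ := by
    intro i
    apply span_subtype_dense
    have himg : (((↑) : S i → F.H i) '' (Set.range fun x : Fin d → G => F1.rightVec x i))
        = Set.range fun x : Fin d → G => F.rightVec x i := by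
      refine (Set.range_comp _ _).symm.trans ?_
      exact congrArg Set.range (funext fun x => hright1coe x i)
    exact le_of_eq (congrArg (fun s => (Submodule.span ℂ s).topologicalClosure) himg).symm
  -- Step 2: compress to the closed spans of the left vectors of F1.
  set T : ∀ i : Fin (d + 1), Submodule ℂ (F1.H i) := fun i =>
    (Submodule.span ℂ (Set.range fun x : Fin d → G => F1.leftVec x i)).topologicalClosure
    with hT
  have hclT : ∀ i, IsClosed ((T i : Set (F1.H i))) := fun i =>
    Submodule.isClosed_topologicalClosure _
  have hmemT : ∀ (x : Fin d → G) (i : Fin (d + 1)), F1.leftVec x i ∈ T i := fun x i =>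
    Submodule.le_topologicalClosure _ (Submodule.subset_span (Set.mem_range_self x))
  have h0T : T 0 = ⊤ := by
    refine eq_top_of_mem_ne_zero F1.e0 (hmemT x₀ 0) fun h => one_ne_zero (α := ℂ) ?_
    rw [F1.leftVec_zero x₀] at h
    calc (1 : ℂ) = F1.e0 (F1.e0.symm 1) := (F1.e0.apply_symm_apply 1).symm
    _ = 0 := by rw [h, map_zero]
  have hdT : T (Fin.last d) = ⊤ := by
    refine eq_top_of_mem_ne_zero F1.ed (hmemT x₀ _) fun h => hφx₀ ?_
    rw [← F1.inner_leftVec_rightVec x₀ (Fin.last d), h, inner_zero_left]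
  have hadjT : ∀ (j : Fin d) (g' : G) (w : F1.H j.castSucc), w ∈ T j.castSucc →
      ContinuousLinearMap.adjoint (F1.xi j g') w ∈ T j.succ := by
    intro j g' w hw
    have hle : T j.castSucc ≤
        (T j.succ).comap (ContinuousLinearMap.adjoint (F1.xi j g') :
          F1.H j.castSucc →ₗ[ℂ] F1.H j.succ) := by
      apply Submodule.topologicalClosure_minimal
      · rw [Submodule.span_le]
        rintro _ ⟨y, rfl⟩
        show ContinuousLinearMap.adjoint (F1.xi j g') (F1.leftVec y j.castSucc) ∈ T j.succ
        rw [F1.adjoint_xi_leftVec y j g']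
        exact hmemT _ _
      · exact (hclT j.succ).preimage (ContinuousLinearMap.adjoint (F1.xi j g')).continuous
    exact hle hw
  have hfac2 : ∀ x : Fin d → G, φ (List.ofFn x).prod
      = F1.e0 (Factorization.restrictRightVec F1 T hclT (hdT.ge Submodule.mem_top) x 0
        : F1.H 0) := by
    intro x
    rw [Factorization.restrictRightVec_eq_projL F1 T hclT _ hadjT x 0,
      projL_coe_eq_self _ _ (h0T.ge Submodule.mem_top)]
    exact F1.factor' x
  set F2 : Factorization.{u} d G φ := F1.restrict T hclT h0T hdT hfac2 with hF2
  refine ⟨F2, ?_, ?_⟩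
  · -- norm comparison
    intro i
    have hbdd : BddAbove (Set.range fun x : G => ‖F.xi i x‖) := by
      obtain ⟨M, hM⟩ := F.bdd i
      exact ⟨M, by rintro _ ⟨x, rfl⟩; exact hM x⟩
    refine ciSup_mono hbdd fun x => ?_
    calc ‖F2.xi i x‖ ≤ ‖F1.xi i x‖ := Factorization.norm_restrictXi_le F1 T hclT i x
    _ ≤ ‖F.xi i x‖ := hxi1 i x
  · intro i _ _
    constructor
    · -- right vectors of F2 are total
      have hproj : ∀ x : Fin d → G, F2.rightVec x i = projL (T i) (hclT i) (F1.rightVec x i) := by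
        intro x
        rw [show F2.rightVec x i
            = Factorization.restrictRightVec F1 T hclT (hdT.ge Submodule.mem_top) x i from
          Factorization.restrict_rightVec F1 T hclT h0T hdT hfac2 x i]
        exact Factorization.restrictRightVec_eq_projL F1 T hclT _ hadjT x i
      have himg : (Set.range fun x : Fin d → G => F2.rightVec x i)
          = (projL (T i) (hclT i)) '' (Set.range fun x : Fin d → G => F1.rightVec x i) := by
        rw [← Set.range_comp]
        exact congrArg Set.range (funext fun x => hproj x)
      rw [himg]
      exact span_image_dense (hright1 i) _ (projL_surjective _ _)
    · -- left vectors of F2 are total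
      apply span_subtype_dense
      have himg : (((↑) : T i → F1.H i) '' (Set.range fun x : Fin d → G => F2.leftVec x i))
          = Set.range fun x : Fin d → G => F1.leftVec x i := by
        refine (Set.range_comp _ _).symm.trans ?_
        exact congrArg Set.range
          (funext fun x => Factorization.restrict_leftVec_coe F1 T hclT h0T hdT hfac2 hmemT x i)
      exact le_of_eq (congrArg (fun s => (Submodule.span ℂ s).topologicalClosure) himg).symm
end

section
/- Let G be a locally compact second countable group with left Haar measure μ, and let (φᵢ)_{i∈I} be a net of bounded measurable functions on G with sup_{i∈I} ‖φᵢ‖_∞ ≤ M < ∞ such that ∫_G φᵢ h dμ → ∫_G h dμ for every h ∈ L¹(G, μ) (i.e. φᵢ → 1 in the weak-* topology σ(L^∞, L¹)). Let f ∈ C_c(G) with f ≥ 0 and ∫_G f dμ = 1. Then the net of functions f * φᵢ, where (f * φᵢ)(x) = ∫_G f(y) φᵢ(y⁻¹x) dμ(y), converges to the constant function 1 uniformly on every compact subset of G. -/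
open ComplexConjugate Filter Topology
open scoped ComplexInnerProductSpace

universe u

open MeasureTheory

section AuxWeakStar

open MeasureTheory Measure Filter Topology Set
open scoped NNReal ENNReal Pointwise

variable {G : Type*} [Group G] [TopologicalSpace G] [IsTopologicalGroup G]


lemma aux_unifcont (f : G → ℝ) (hfc : Continuous f) (hfs : HasCompactSupport f)
    [LocallyCompactSpace G] {ε : ℝ} (hε : 0 < ε) :
    ∃ V ∈ 𝓝 (1 : G), ∀ g ∈ V, ∀ u : G, |f (g * u) - f u| ≤ ε := by
  obtain ⟨W, hWc, hW1⟩ := exists_compact_mem_nhds (1 : G)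
  have key : ∀ u : G, ∃ V N : Set G, V ∈ 𝓝 (1 : G) ∧ N ∈ 𝓝 u ∧
      ∀ g ∈ V, ∀ w ∈ N, |f (g * w) - f w| < ε := by
    intro u
    have hO : {w : G | |f w - f u| < ε / 2} ∈ 𝓝 u := by
      have hcont : Continuous fun w => |f w - f u| := (hfc.sub continuous_const).abs
      have : IsOpen {w : G | |f w - f u| < ε / 2} :=
        isOpen_lt hcont continuous_const
      exact this.mem_nhds (by simp [half_pos hε])
    have hmul : {p : G × G | p.1 * p.2 ∈ {w : G | |f w - f u| < ε / 2}} ∈ 𝓝 ((1 : G), u) := by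
      apply (continuous_mul.continuousAt (x := ((1 : G), u))).preimage_mem_nhds
      simpa using hO
    rw [mem_nhds_prod_iff] at hmul
    obtain ⟨V, hV, N, hN, hVN⟩ := hmul
    refine ⟨V, N ∩ {w : G | |f w - f u| < ε / 2}, hV, inter_mem hN hO, ?_⟩
    intro g hg w hw
    have h1 : |f (g * w) - f u| < ε / 2 := hVN (Set.mk_mem_prod hg hw.1)
    have h2 : |f w - f u| < ε / 2 := hw.2
    calc |f (g * w) - f w| ≤ |f (g * w) - f u| + |f u - f w| := abs_sub_le _ _ _
      _ < ε / 2 + ε / 2 := by rw [abs_sub_comm (f u)]; exact add_lt_add h1 h2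
      _ = ε := add_halves ε
  choose V N hV hN hkey using key
  set C : Set G := W⁻¹ * tsupport f with hCdef
  have hC : IsCompact C := hWc.inv.mul hfs
  obtain ⟨t, hts, hcover⟩ := hC.elim_nhds_subcover N (fun u _ => hN u)
  refine ⟨W ∩ ⋂ u ∈ t, V u, inter_mem hW1 ((biInter_finset_mem t).mpr fun u _ => hV u), ?_⟩
  rintro g ⟨hgW, hgV⟩ u
  by_cases hu : u ∈ C
  · obtain ⟨u₀, hu₀t, hu₀⟩ := Set.mem_iUnion₂.1 (hcover hu)
    have hgV₀ : g ∈ V u₀ := by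
      have := Set.mem_iInter₂.1 hgV u₀ hu₀t
      exact this
    exact (hkey u₀ g hgV₀ u hu₀).le
  · have h1W : (1 : G) ∈ W⁻¹ := by simpa using mem_of_mem_nhds hW1
    have h1 : f u = 0 := image_eq_zero_of_notMem_tsupport fun hmem =>
      hu (Set.mem_mul.mpr ⟨1, h1W, u, hmem, one_mul u⟩)
    have h2 : f (g * u) = 0 := image_eq_zero_of_notMem_tsupport fun hmem =>
      hu (Set.mem_mul.mpr ⟨g⁻¹, Set.inv_mem_inv.mpr hgW, g * u, hmem, inv_mul_cancel_left g u⟩)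
    simp [h1, h2, hε.le]

lemma aux_equi [LocallyCompactSpace G] [SecondCountableTopology G] [MeasurableSpace G]
    [BorelSpace G] (μ : Measure G) [μ.IsHaarMeasure] (f : G → ℝ) (hfc : Continuous f)
    (hfs : HasCompactSupport f) (M : ℝ) (hM : 0 ≤ M) {ε : ℝ} (hε : 0 < ε) :
    ∃ V ∈ 𝓝 (1 : G), ∀ g ∈ V, ∀ φ : G → ℂ, Measurable φ → (∀ z, ‖φ z‖ ≤ M) →
      ∀ x : G, ‖(∫ y, (f y : ℂ) * φ (y⁻¹ * (g * x)) ∂μ)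
        - ∫ y, (f y : ℂ) * φ (y⁻¹ * x) ∂μ‖ ≤ ε := by
  obtain ⟨W, hWc, hW1⟩ := exists_compact_mem_nhds (1 : G)
  have h1W : (1 : G) ∈ W⁻¹ := by simpa using mem_of_mem_nhds hW1
  set S : Set G := closure (W⁻¹ * tsupport f) with hSdef
  have hS : IsCompact S := (hWc.inv.mul hfs).closure
  have hSmeas : MeasurableSet S := isClosed_closure.measurableSet
  have hSfin : μ S < ∞ := hS.measure_lt_top
  set δ : ℝ := ε / (M * (μ S).toReal + 1) with hδdef
  have hden : 0 < M * (μ S).toReal + 1 := by positivity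
  have hδ : 0 < δ := div_pos hε hden
  obtain ⟨V, hV, hunif⟩ := aux_unifcont f hfc hfs hδ
  refine ⟨V ∩ W, inter_mem hV hW1, ?_⟩
  rintro g ⟨hgV, hgW⟩ φ hφ hφbdd x
  have hint : ∀ g₀ : G, Integrable (fun u => (f (g₀ * u) : ℂ) * φ (u⁻¹ * x)) μ := by
    intro g₀
    have h1 : Integrable (fun u => (f (g₀ * u) : ℂ)) μ := by
      have h2 : Integrable (fun u => f (g₀ * u)) μ :=
        (hfc.comp (continuous_mul_left g₀)).integrable_of_hasCompactSupport
          (hfs.comp_homeomorph (Homeomorph.mulLeft g₀))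
      exact h2.ofReal
    have h3 := h1.bdd_mul (hφ.comp (measurable_inv.mul_const x)).aestronglyMeasurable
      (Eventually.of_forall fun u => hφbdd _)
    exact h3.congr (Eventually.of_forall fun u => mul_comm _ _)
  have step1 : (∫ y, (f y : ℂ) * φ (y⁻¹ * (g * x)) ∂μ)
      = ∫ u, (f (g * u) : ℂ) * φ (u⁻¹ * x) ∂μ := by
    rw [← integral_mul_left_eq_self (fun y => (f y : ℂ) * φ (y⁻¹ * (g * x))) g]
    congr 1
    ext u
    have : (g * u)⁻¹ * (g * x) = u⁻¹ * x := by
      simp [mul_inv_rev, mul_assoc]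
    rw [this]
  have step2 : (∫ u, (f (g * u) : ℂ) * φ (u⁻¹ * x) ∂μ)
      - (∫ y, (f y : ℂ) * φ (y⁻¹ * x) ∂μ)
      = ∫ u, ((f (g * u) : ℂ) - (f u : ℂ)) * φ (u⁻¹ * x) ∂μ := by
    rw [← integral_sub (hint g) (by simpa using hint 1)]
    congr 1
    ext u
    ring
  rw [step1, step2]
  have hgbound : ∀ u, ‖((f (g * u) : ℂ) - (f u : ℂ)) * φ (u⁻¹ * x)‖
      ≤ Set.indicator S (fun _ => δ * M) u := by
    intro u
    by_cases hu : u ∈ S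
    · rw [Set.indicator_of_mem hu, norm_mul]
      have h1 : ‖((f (g * u) : ℂ) - (f u : ℂ))‖ ≤ δ := by
        rw [← Complex.ofReal_sub, Complex.norm_real, Real.norm_eq_abs]
        exact hunif g hgV u
      exact mul_le_mul h1 (hφbdd _) (norm_nonneg _) hδ.le
    · rw [Set.indicator_of_notMem hu]
      have h1 : f u = 0 := image_eq_zero_of_notMem_tsupport fun hmem =>
        hu (subset_closure (Set.mem_mul.mpr ⟨1, h1W, u, hmem, one_mul u⟩))
      have h2 : f (g * u) = 0 := image_eq_zero_of_notMem_tsupport fun hmem =>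
        hu (subset_closure (Set.mem_mul.mpr ⟨g⁻¹, Set.inv_mem_inv.mpr hgW, g * u, hmem, inv_mul_cancel_left g u⟩))
      simp [h1, h2]
  have hbnd_int : Integrable (S.indicator fun _ => δ * M) μ :=
    (integrable_indicator_iff hSmeas).mpr
      (integrableOn_const hSfin.ne)
  refine (norm_integral_le_of_norm_le hbnd_int (Eventually.of_forall hgbound)).trans ?_
  rw [integral_indicator hSmeas, setIntegral_const, smul_eq_mul]
  calc (μ S).toReal * (δ * M) = δ * (M * (μ S).toReal) := by ring
    _ ≤ δ * (M * (μ S).toReal + 1) := by nlinarith [hδ.le]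
    _ = ε := by rw [hδdef]; field_simp

section Density

variable [LocallyCompactSpace G] [SecondCountableTopology G]
    [MeasurableSpace G] [BorelSpace G]


lemma aux_density (μ : Measure G) [μ.IsHaarMeasure] (f : G → ℝ) (hfc : Continuous f)
    (hfs : HasCompactSupport f) (hfpos : ∀ x, 0 ≤ f x) (x : G) :
    ∃ h : G → ℂ, Integrable h μ ∧ (∫ z, h z ∂μ) = ((∫ y, f y ∂μ : ℝ) : ℂ) ∧
      ∀ φ : G → ℂ, Measurable φ →
        ∫ z, φ z * h z ∂μ = ∫ y, (f y : ℂ) * φ (y⁻¹ * x) ∂μ := by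
  have hf_int : Integrable f μ := hfc.integrable_of_hasCompactSupport hfs
  set T : G → G := fun y => y⁻¹ * x with hTdef
  have hTmeas : Measurable T := measurable_inv.mul_const x
  have hTqmp : QuasiMeasurePreserving T μ μ :=
    (quasiMeasurePreserving_mul_right μ x).comp (quasiMeasurePreserving_inv μ)
  set ρ : Measure G := μ.withDensity (fun y => ENNReal.ofReal (f y)) with hρdef
  haveI hρfin : IsFiniteMeasure ρ := isFiniteMeasure_withDensity_ofReal hf_int.2
  set ν : Measure G := ρ.map T with hνdef
  haveI : IsFiniteMeasure ν := by
    constructor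
    rw [Measure.map_apply hTmeas MeasurableSet.univ]
    exact measure_lt_top ρ _
  have hνμ : ν ≪ μ :=
    ((withDensity_absolutelyContinuous μ _).map hTmeas).trans hTqmp.absolutelyContinuous
  refine ⟨fun z => ((ν.rnDeriv μ z).toReal : ℂ), (Measure.integrable_toReal_rnDeriv).ofReal,
    ?_, ?_⟩
  · rw [show (∫ z, (fun z => (((ν.rnDeriv μ z).toReal : ℝ) : ℂ)) z ∂μ)
        = ((∫ z, (ν.rnDeriv μ z).toReal ∂μ : ℝ) : ℂ) from integral_ofReal]
    norm_cast
    rw [Measure.integral_toReal_rnDeriv hνμ]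
    rw [measureReal_def, Measure.map_apply hTmeas MeasurableSet.univ, Set.preimage_univ, hρdef,
      withDensity_apply _ MeasurableSet.univ, Measure.restrict_univ,
      integral_eq_lintegral_of_nonneg_ae (Eventually.of_forall hfpos)
        hf_int.aestronglyMeasurable]
  · intro φ hφ
    calc ∫ z, φ z * ((ν.rnDeriv μ z).toReal : ℂ) ∂μ
        = ∫ z, (ν.rnDeriv μ z).toReal • φ z ∂μ := by
          simp_rw [Complex.real_smul, mul_comm]
      _ = ∫ z, φ z ∂ν := integral_rnDeriv_smul hνμ
      _ = ∫ y, φ (T y) ∂ρ := integral_map hTmeas.aemeasurable hφ.aestronglyMeasurable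
      _ = ∫ y, (f y : ℂ) * φ (T y) ∂μ := by
          rw [hρdef]
          have : (fun y => ENNReal.ofReal (f y)) =
              fun y => ((Real.toNNReal (f y) : ℝ≥0) : ℝ≥0∞) := rfl
          rw [this, integral_withDensity_eq_integral_smul
            hfc.measurable.real_toNNReal (fun z => φ (T z))]
          congr 1
          ext y
          rw [NNReal.smul_def, Real.coe_toNNReal _ (hfpos y), Complex.real_smul]

end Density

end AuxWeakStar

/-- If a uniformly bounded net of measurable functions converges to `1`
in the weak-* topology `σ(L^∞, L¹)`, then its convolutions with a fixed nonnegative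
continuous compactly supported function of integral one converge to `1` uniformly on
compact subsets. -/
theorem tendstoUniformlyOn_conv_of_weakStar
    {G : Type*} [Group G] [TopologicalSpace G] [IsTopologicalGroup G]
    [LocallyCompactSpace G] [SecondCountableTopology G]
    [MeasurableSpace G] [BorelSpace G] (μ : Measure G) [μ.IsHaarMeasure]
    {ι : Type*} (l : Filter ι) [l.NeBot] (φ : ι → G → ℂ) (M : ℝ)
    (hmeas : ∀ i, Measurable (φ i)) (hbdd : ∀ i x, ‖φ i x‖ ≤ M)
    (hconv : ∀ h : G → ℂ, Integrable h μ →
      Tendsto (fun i => ∫ x, φ i x * h x ∂μ) l (𝓝 (∫ x, h x ∂μ)))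
    (f : G → ℝ) (hfc : Continuous f) (hfs : HasCompactSupport f)
    (hfpos : ∀ x, 0 ≤ f x) (hfint : ∫ x, f x ∂μ = 1)
    (K : Set G) (hK : IsCompact K) :
    TendstoUniformlyOn (fun i x => ∫ y, (f y : ℂ) * φ i (y⁻¹ * x) ∂μ)
      (fun _ => 1) l K := by

  classical
  rw [Metric.tendstoUniformlyOn_iff]
  intro ε hε
  set M' : ℝ := max M 0 with hM'
  have hbdd' : ∀ i z, ‖φ i z‖ ≤ M' := fun i z => (hbdd i z).trans (le_max_left _ _)
  obtain ⟨V, hV, hequi⟩ := aux_equi μ f hfc hfs M' (le_max_right _ _) (half_pos hε)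
  set F : ι → G → ℂ := fun i x => ∫ y, (f y : ℂ) * φ i (y⁻¹ * x) ∂μ with hF
  have hpt : ∀ c : G, Tendsto (fun i => F i c) l (𝓝 1) := by
    intro c
    obtain ⟨h, hint, hsum, hrepr⟩ := aux_density μ f hfc hfs hfpos c
    have h1 := hconv h hint
    have h2 : ∀ i, ∫ z, φ i z * h z ∂μ = F i c := fun i => hrepr (φ i) (hmeas i)
    have h3 : (∫ z, h z ∂μ) = 1 := by rw [hsum, hfint]; norm_num
    rw [h3] at h1
    exact h1.congr h2
  have hcov : ∀ c : G, ((fun z => z * c⁻¹) ⁻¹' V) ∈ 𝓝 c := by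
    intro c
    apply (continuous_mul_right c⁻¹).continuousAt.preimage_mem_nhds
    simpa using hV
  obtain ⟨t, hts, hcover⟩ :=
    hK.elim_nhds_subcover (fun c => (fun z => z * c⁻¹) ⁻¹' V) (fun c _ => hcov c)
  have hev : ∀ᶠ i in l, ∀ c ∈ t, dist (F i c) 1 < ε / 2 := by
    rw [eventually_all_finset]
    intro c _
    exact Metric.tendsto_nhds.mp (hpt c) (ε / 2) (half_pos hε)
  filter_upwards [hev] with i hi x hx
  obtain ⟨c, hct, hxc⟩ := Set.mem_iUnion₂.1 (hcover hx)
  have hgV : x * c⁻¹ ∈ V := hxc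
  have h1 : ‖F i x - F i c‖ ≤ ε / 2 := by
    have h0 := hequi (x * c⁻¹) hgV (φ i) (hmeas i) (hbdd' i) c
    rwa [inv_mul_cancel_right] at h0
  have h2 : ‖F i c - 1‖ < ε / 2 := by
    rw [← dist_eq_norm]
    exact hi c hct
  calc dist ((fun _ : G => (1 : ℂ)) x) (F i x) = ‖F i x - 1‖ := by
        rw [dist_comm, dist_eq_norm]
    _ ≤ ‖F i x - F i c‖ + ‖F i c - 1‖ := by
        have hsplit : F i x - 1 = (F i x - F i c) + (F i c - 1) := by ring
        rw [hsplit]; exact norm_add_le _ _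
    _ < ε / 2 + ε / 2 := add_lt_add_of_le_of_lt h1 h2
    _ = ε := add_halves ε
end

section
/- Let G be a locally compact second countable group, H a closed subgroup of G, d ≥ 2 an integer, and C > 0. Suppose that for every compact subset K ⊆ G and every ε > 0 there exists φ ∈ C_c(G) admitting a factorization of length d (over G) of constant at most C such that sup_{x∈K} |φ(x) − 1| < ε. Then for every compact subset L ⊆ H and every ε > 0 there exists ψ ∈ C_c(H) admitting a factorization of length d (over H) of constant at most C such that sup_{x∈L} |ψ(x) − 1| < ε. (Consequently Λ_{CH}(H, d) ≤ Λ_{CH}(G, d).) -/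
open ComplexConjugate Filter Topology
open scoped ComplexInnerProductSpace

universe u

open MeasureTheory

/-- Restriction of a factorization to a subgroup. -/
noncomputable def Factorization.restrictSubgroup {d : ℕ} {G : Type*} [Group G] {φ : G → ℂ}
    (F : Factorization.{0} d G φ) (H : Subgroup G) :
    Factorization.{0} d H (fun h => φ (h : G)) where
  H := F.H
  e0 := F.e0
  ed := F.ed
  xi := fun i h => F.xi i (h : G)
  bdd := fun i => (F.bdd i).imp fun M hM h => hM (h : G)
  factor := fun x => by
    have key := F.factor (fun i => (x i : G))
    have hcoe : ((List.ofFn x).prod : G) = (List.ofFn fun i => ((x i : G))).prod := by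
      simp only [SubmonoidClass.coe_list_prod, List.map_ofFn]
      rfl
    rw [hcoe]
    exact key

theorem Factorization.restrictSubgroup_const_le {d : ℕ} {G : Type*} [Group G] {φ : G → ℂ}
    (F : Factorization.{0} d G φ) (H : Subgroup G) :
    (F.restrictSubgroup H).const ≤ F.const := by
  unfold Factorization.const
  apply Finset.prod_le_prod
  · intro i _
    exact Real.iSup_nonneg fun h => norm_nonneg _
  · intro i _
    rcases F.bdd i with ⟨M, hM⟩
    have hbdd : BddAbove (Set.range fun x : G => ‖F.xi i x‖) := by
      refine ⟨M, ?_⟩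
      rintro y ⟨x, rfl⟩
      exact hM x
    exact Real.iSup_le (fun h => le_ciSup hbdd (h : G))
      (Real.iSup_nonneg fun x => norm_nonneg _)

/-- The compactly-supported `M_d`-approximation condition with constant
`C` passes from a locally compact second countable group to its closed subgroups; hence
`Λ_CH(H, d) ≤ Λ_CH(G, d)`. -/
theorem mdWA_approx_of_closedSubgroup
    {G : Type*} [Group G] [TopologicalSpace G] [IsTopologicalGroup G]
    [LocallyCompactSpace G] [SecondCountableTopology G]
    (d : ℕ) (hd : 2 ≤ d) (C : ℝ) (hC : 0 < C)
    (H : Subgroup G) (hH : IsClosed (H : Set G))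
    (h : ∀ K : Set G, IsCompact K → ∀ ε > (0 : ℝ),
      ∃ φ : G → ℂ, Continuous φ ∧ HasCompactSupport φ ∧
        (∃ F : Factorization.{0} d G φ, F.const ≤ C) ∧
        ∀ x ∈ K, ‖φ x - 1‖ < ε) :
    ∀ L : Set H, IsCompact L → ∀ ε > (0 : ℝ),
      ∃ ψ : H → ℂ, Continuous ψ ∧ HasCompactSupport ψ ∧
        (∃ F : Factorization.{0} d H ψ, F.const ≤ C) ∧
        ∀ x ∈ L, ‖ψ x - 1‖ < ε := by
  intro L hL ε hε
  obtain ⟨φ, hcont, hsupp, ⟨F, hF⟩, happrox⟩ :=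
    h (Subtype.val '' L) (hL.image continuous_subtype_val) ε hε
  refine ⟨fun x => φ (x : G), hcont.comp continuous_subtype_val,
    hsupp.comp_isClosedEmbedding hH.isClosedEmbedding_subtypeVal,
    ⟨F.restrictSubgroup H, (F.restrictSubgroup_const_le H).trans hF⟩,
    fun x hx => happrox _ ⟨x, hx, rfl⟩⟩
end

section
/- Let G be a locally compact second countable group, H a closed subgroup of G, d ≥ 2 an integer, and C > 0. Suppose that for every compact subset K ⊆ G and every ε > 0 there exists φ ∈ C₀(G) admitting a factorization of length d (over G) of constant at most C such that sup_{x∈K} |φ(x) − 1| < ε. Then for every compact subset L ⊆ H and every ε > 0 there exists ψ ∈ C₀(H) admitting a factorization of length d (over H) of constant at most C such that sup_{x∈L} |ψ(x) − 1| < ε. (Consequently Λ_{WH}(H, d) ≤ Λ_{WH}(G, d).) -/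
open ComplexConjugate Filter Topology
open scoped ComplexInnerProductSpace

universe u

open MeasureTheory

/-- The `C₀` `M_d`-approximation condition with constant `C` passes
from a locally compact second countable group to its closed subgroups; hence
`Λ_WH(H, d) ≤ Λ_WH(G, d)`. -/
theorem mdWH_approx_of_closedSubgroup
    {G : Type*} [Group G] [TopologicalSpace G] [IsTopologicalGroup G]
    [LocallyCompactSpace G] [SecondCountableTopology G]
    (d : ℕ) (hd : 2 ≤ d) (C : ℝ) (hC : 0 < C)
    (H : Subgroup G) (hH : IsClosed (H : Set G))
    (h : ∀ K : Set G, IsCompact K → ∀ ε > (0 : ℝ),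
      ∃ φ : G → ℂ, Continuous φ ∧ Tendsto φ (cocompact G) (𝓝 0) ∧
        (∃ F : Factorization.{0} d G φ, F.const ≤ C) ∧
        ∀ x ∈ K, ‖φ x - 1‖ < ε) :
    ∀ L : Set H, IsCompact L → ∀ ε > (0 : ℝ),
      ∃ ψ : H → ℂ, Continuous ψ ∧ Tendsto ψ (cocompact H) (𝓝 0) ∧
        (∃ F : Factorization.{0} d H ψ, F.const ≤ C) ∧
        ∀ x ∈ L, ‖ψ x - 1‖ < ε := by
  intro L hL ε hε
  obtain ⟨φ, hφc, hφ0, ⟨F, hF⟩, hφK⟩ :=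
    h (Subtype.val '' L) (hL.image continuous_subtype_val) ε hε
  refine ⟨fun x : H => φ (x : G), hφc.comp continuous_subtype_val,
    hφ0.comp (hH.isClosedEmbedding_subtypeVal.tendsto_cocompact), ?_, ?_⟩
  · have hfac : ∀ x : Fin d → H,
        φ ((List.ofFn x).prod : G) =
          F.e0 (Fin.reverseInduction (motive := fun i => F.H i) (F.ed.symm 1)
            (fun j v => F.xi j ((x j : G)) v) 0) := by
      intro x
      have := F.factor (fun i => (x i : G))
      have hprod : ((List.ofFn x).prod : G) = (List.ofFn fun i => (x i : G)).prod := by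
        rw [SubmonoidClass.coe_list_prod, List.map_ofFn]
        rfl
      rw [hprod]
      exact this
    refine ⟨⟨F.H, F.e0, F.ed, fun i x => F.xi i (x : G),
      fun i => (F.bdd i).imp fun M hM x => hM x, hfac⟩, ?_⟩
    refine le_trans ?_ hF
    show (∏ i : Fin d, ⨆ x : H, ‖F.xi i (x : G)‖) ≤ F.const
    refine Finset.prod_le_prod (fun i _ => Real.iSup_nonneg fun _ => norm_nonneg _)
      (fun i _ => ?_)
    obtain ⟨M, hM⟩ := F.bdd i
    exact ciSup_le fun x => le_ciSup ⟨M, Set.forall_mem_range.2 hM⟩ (x : G)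
  · intro x hx
    exact hφK _ ⟨x, hx, rfl⟩
end
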